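/- arXiv:1407.0887 — 7 statements merged into one kernel-verified Lean document; each statement's English description precedes it below -/
import Mathlib

section
/- Consider the implicit scheme (θ = 1). Assume hypothesis (fmy) holds with l^Y > 0, hypothesis (fLz) holds with constant L^Z, and Λ (L^Z)² ≤ 2 l^Y. Then for every essentially bounded terminal condition ξ and every 0 ≤ i ≤ n, |Y_i| ≤ ‖ξ‖_∞ almost surely; in particular |Y_0| ≤ ‖ξ‖_∞ almost surely, i.e. the implicit Euler scheme is numerically stable (in fact A-stable, since the condition does not involve h). -/
open MeasureTheory
open scoped RealInnerProductSpace

open scoped NNReal ENNReal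

private lemma quad_of_rat (A B σ2 : ℝ) (hσ : 0 < σ2)
    (h : ∀ q : ℚ, 0 ≤ A - 2*(q:ℝ)*B + (q:ℝ)^2*σ2) : B^2 ≤ σ2 * A := by
  have hall : ∀ s : ℝ, 0 ≤ A - 2*s*B + s^2*σ2 := by
    have hc : IsClosed {s : ℝ | 0 ≤ A - 2*s*B + s^2*σ2} :=
      isClosed_le continuous_const (by continuity)
    have hsub : Set.range ((↑) : ℚ → ℝ) ⊆ {s : ℝ | 0 ≤ A - 2*s*B + s^2*σ2} := by
      rintro _ ⟨q, rfl⟩; exact h q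
    intro s
    have hs : s ∈ closure (Set.range ((↑) : ℚ → ℝ)) := by
      rw [(Rat.denseRange_cast (𝕜 := ℝ)).closure_eq]; trivial
    exact hc.closure_subset_iff.2 hsub hs
  have h1 := hall (B/σ2)
  have h2 : B/σ2 * σ2 = B := div_mul_cancel₀ B hσ.ne'
  nlinarith [mul_nonneg h1 hσ.le, h2]

private lemma final_ineq {a b z h M lY LZ Lam : ℝ} (ha : 0 ≤ a) (hb : 0 ≤ b) (hz : 0 ≤ z)
    (hh : 0 < h) (hM : 0 ≤ M) (hlY : 0 < lY) (hLZ : 0 ≤ LZ) (hLam : 0 < Lam)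
    (hcond : Lam * LZ^2 ≤ 2*lY)
    (h1 : a^2 ≤ a*b + h*(-lY*a^2 + LZ*a*z))
    (h2 : h*z^2 ≤ Lam*(M^2 - b^2)) : a ≤ M := by
  have hzz : 0 ≤ h * z^2 := mul_nonneg hh.le (sq_nonneg z)
  have hM2b2 : 0 ≤ M^2 - b^2 := by nlinarith [hzz, h2]
  have hbM : b ≤ M := by
    by_contra hcon
    push_neg at hcon
    have h3 : 0 < (b - M) * (b + M) := mul_pos (by linarith) (by linarith)
    nlinarith [hM2b2, h3]
  have P1 : 0 ≤ h * (2*lY*a - LZ*z)^2 := mul_nonneg hh.le (sq_nonneg _)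
  have P2 : LZ^2*(h*z^2) ≤ LZ^2*(Lam*(M^2-b^2)) := mul_le_mul_of_nonneg_left h2 (sq_nonneg LZ)
  have P3 : Lam*LZ^2*(M^2-b^2) ≤ 2*lY*(M^2-b^2) := mul_le_mul_of_nonneg_right hcond hM2b2
  have P4 : 4*lY*a^2 ≤ 4*lY*(a*b + h*(-lY*a^2 + LZ*a*z)) :=
    mul_le_mul_of_nonneg_left h1 (by linarith)
  have hkey2 : 4*lY*a^2 ≤ 4*lY*(a*b) + 2*lY*(M^2-b^2) := by nlinarith [P1, P2, P3, P4]
  have hkey : a^2 ≤ a*b + (M^2-b^2)/2 := by nlinarith [hkey2, hlY]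
  by_contra hcon
  push_neg at hcon
  have h5 : 0 < (a - M) * (a - b) := mul_pos (by linarith) (by linarith)
  nlinarith [hkey, h5, mul_nonneg hM (by linarith : (0:ℝ) ≤ a - M)]

private lemma coord_le_norm {ι : Type*} [Fintype ι] (x : EuclideanSpace ℝ ι) (i : ι) :
    |x i| ≤ ‖x‖ := by
  rw [EuclideanSpace.norm_eq, ← Real.sqrt_sq_eq_abs]
  apply Real.sqrt_le_sqrt
  have := Finset.single_le_sum (f := fun j => ‖x j‖ ^ 2) (fun j _ => sq_nonneg _)
    (Finset.mem_univ i)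
  simpa [Real.norm_eq_abs, sq_abs] using this

private lemma norm_sq_eq {ι : Type*} [Fintype ι] (x : EuclideanSpace ℝ ι) :
    ‖x‖^2 = ∑ i, (x i)^2 := by
  rw [EuclideanSpace.norm_eq, Real.sq_sqrt (by positivity)]
  simp [Real.norm_eq_abs, sq_abs]

private lemma condexp_clm {Ω E G : Type*} {F : MeasurableSpace Ω} [m0 : MeasurableSpace Ω]
    {μ : Measure Ω} [IsFiniteMeasure μ]
    [NormedAddCommGroup E] [NormedSpace ℝ E] [CompleteSpace E]
    [NormedAddCommGroup G] [NormedSpace ℝ G] [CompleteSpace G]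
    (hF : F ≤ m0)
    (L : E →L[ℝ] G) {g : Ω → E} (hg : Integrable g μ) :
    (fun ω => L ((μ[g|F]) ω)) =ᵐ[μ] μ[fun ω => L (g ω)|F] := by
  refine ae_eq_condExp_of_forall_setIntegral_eq hF (L.integrable_comp hg)
    (fun s _ _ => (L.integrable_comp integrable_condExp).integrableOn)
    (fun s hs _ => ?_)
    ((L.continuous.comp_stronglyMeasurable stronglyMeasurable_condExp).aestronglyMeasurable)
  calc ∫ x in s, L ((μ[g|F]) x) ∂μ = L (∫ x in s, (μ[g|F]) x ∂μ) :=
        L.integral_comp_comm integrable_condExp.integrableOn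
    _ = L (∫ x in s, g x ∂μ) := by rw [setIntegral_condExp hF hg hs]
    _ = ∫ x in s, L (g x) ∂μ := (L.integral_comp_comm hg.integrableOn).symm

private lemma aesm'_euclidean {Ω : Type*} {F : MeasurableSpace Ω} [m0 : MeasurableSpace Ω]
    {μ : Measure Ω} {ι : Type*} [Fintype ι]
    {g : Ω → EuclideanSpace ℝ ι}
    (h : ∀ i, AEStronglyMeasurable[F] (fun ω => g ω i) μ) :
    AEStronglyMeasurable[F] g μ := by
  choose G hGm hGe using h
  refine ⟨fun ω => (EuclideanSpace.equiv ι ℝ).symm (fun i => G i ω), ?_, ?_⟩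
  · have hmeas : Measurable[F] fun ω => (fun i => G i ω : ι → ℝ) := by
      exact @measurable_pi_lambda Ω ι (fun _ => ℝ) F _ _ (fun i => (hGm i).measurable)

    exact ((EuclideanSpace.equiv ι ℝ).symm.continuous.measurable.comp hmeas).stronglyMeasurable
  · have := ae_all_iff.2 hGe
    filter_upwards [this] with ω hω
    ext i
    simpa using hω i

private lemma condexp_CS {Ω : Type*} {F : MeasurableSpace Ω} [m0 : MeasurableSpace Ω]
    {μ : Measure Ω} [IsProbabilityMeasure μ] (hF : F ≤ m0)
    {W H : Ω → ℝ} {C : ℝ} (hW : AEStronglyMeasurable W μ) (hWb : ∀ᵐ ω ∂μ, |W ω| ≤ C)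
    (hH : MemLp H 2 μ) {σ2 : ℝ} (hσ : 0 < σ2)
    (hvar : μ[fun ω => H ω * H ω|F] =ᵐ[μ] fun _ => σ2) :
    ∀ᵐ ω ∂μ, ((μ[fun ω => W ω * H ω|F]) ω)^2 ≤ σ2 * ((μ[fun ω => W ω * W ω|F]) ω) := by
  have hWb' : ∀ᵐ ω ∂μ, ‖W ω‖ ≤ C := by simpa [Real.norm_eq_abs] using hWb
  have hWint : Integrable W μ := (memLp_top_of_bound hW C hWb').integrable le_top
  have hHint : Integrable H μ := hH.integrable one_le_two
  have hWH : Integrable (fun ω => W ω * H ω) μ := hHint.bdd_mul hW hWb'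
  have hWW : Integrable (fun ω => W ω * W ω) μ := hWint.bdd_mul hW hWb'
  have hHH : Integrable (fun ω => H ω * H ω) μ := by
    simpa [pow_two] using hH.integrable_sq
  have key : ∀ q : ℚ, ∀ᵐ ω ∂μ,
      0 ≤ (μ[fun ω => W ω * W ω|F]) ω - 2*(q:ℝ)*((μ[fun ω => W ω * H ω|F]) ω) + (q:ℝ)^2*σ2 := by
    intro q
    set s : ℝ := (q:ℝ) with hs
    have hexp : (fun ω => (W ω - s * H ω) * (W ω - s * H ω)) =
        ((fun ω => W ω * W ω) - (2*s) • (fun ω => W ω * H ω)) + s^2 • (fun ω => H ω * H ω) := by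
      funext ω
      simp only [Pi.add_apply, Pi.sub_apply, Pi.smul_apply, smul_eq_mul]
      ring
    have hi2 : Integrable ((2*s) • fun ω => W ω * H ω) μ := hWH.smul _
    have hi3 : Integrable ((s^2 : ℝ) • fun ω => H ω * H ω) μ := hHH.smul _
    have hnn : 0 ≤ᵐ[μ] fun ω => (W ω - s * H ω) * (W ω - s * H ω) :=
      Filter.Eventually.of_forall fun ω => mul_self_nonneg _
    have h0 := condExp_nonneg (μ := μ) (m := F) hnn
    rw [hexp] at h0
    have h_add := condExp_add (μ := μ) (m := F) (hWW.sub hi2) hi3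
    have h_sub := condExp_sub (μ := μ) (m := F) hWW hi2
    have h_sm2 := condExp_smul (μ := μ) (m := F) (2*s) (fun ω => W ω * H ω)
    have h_sm3 := condExp_smul (μ := μ) (m := F) (s^2 : ℝ) (fun ω => H ω * H ω)
    filter_upwards [h0, h_add, h_sub, h_sm2, h_sm3, hvar] with ω e0 e1 e2 e3 e4 e5
    rw [e1] at e0
    simp only [Pi.add_apply, Pi.sub_apply, Pi.zero_apply] at e0 e2 ⊢
    rw [e2, e3, e4] at e0
    simp only [Pi.smul_apply, smul_eq_mul, e5] at e0
    nlinarith [e0]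
  have keyall := ae_all_iff.2 key
  filter_upwards [keyall] with ω hω
  exact quad_of_rat _ _ _ hσ hω

set_option maxHeartbeats 2000000 in
/-- Numerical stability of the implicit Euler scheme (θ = 1) for BSDEs in the
multidimensional case: under monotonicity in `y` (constant `lY > 0`), Lipschitz
continuity in `z` (constant `LZ`), and the condition `Λ (L^Z)² ≤ 2 l^Y`, the scheme
started from an essentially bounded terminal condition `ξ` satisfies
`|Y_i| ≤ ‖ξ‖_∞` a.s. for every `i`; in particular it is A-stable. -/
theorem implicit_euler_numerically_stable
    {Ω : Type*} [MeasurableSpace Ω] (μ : Measure Ω) [IsProbabilityMeasure μ]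
    (n m d : ℕ) (hn : 1 ≤ n) (hm : 1 ≤ m) (hd : 1 ≤ d)
    -- the time grid
    (t : Fin (n + 1) → ℝ) (ht0 : t 0 = 0) (ht : StrictMono t)
    -- the discrete filtration
    (F : Fin (n + 1) → MeasurableSpace Ω)
    (hF_mono : Monotone F) (hF_le : ∀ i, F i ≤ ‹MeasurableSpace Ω›)
    -- the H-coefficients
    (lam Lam : ℝ) (hlam : 0 < lam) (hLam : 0 < Lam)
    (c : Fin n → ℝ) (hc : ∀ i, lam / (d : ℝ) ≤ c i ∧ c i ≤ Lam / (d : ℝ))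
    (H : Fin n → Ω → EuclideanSpace ℝ (Fin d))
    (hH_meas : ∀ i, Measurable[F i.succ] (H i))
    (hH_L2 : ∀ i, MemLp (H i) 2 μ)
    (hH_mean : ∀ i, μ[H i|F i.castSucc] =ᵐ[μ] 0)
    (hH_cov : ∀ (i : Fin n) (k l : Fin d),
      (fun ω => (t i.succ - t i.castSucc) * (μ[fun ω' => H i ω' k * H i ω' l|F i.castSucc]) ω)
        =ᵐ[μ] fun _ => if k = l then c i else 0)
    -- the driver
    (f : EuclideanSpace ℝ (Fin m) → EuclideanSpace ℝ (Fin m × Fin d) → EuclideanSpace ℝ (Fin m))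
    (hf_cont : Continuous fun p : EuclideanSpace ℝ (Fin m) × EuclideanSpace ℝ (Fin m × Fin d) =>
      f p.1 p.2)
    (hf0 : f 0 0 = 0)
    (lY LZ : ℝ) (hlY : 0 < lY) (hLZ : 0 ≤ LZ)
    -- (fmy): monotonicity in y
    (hfmy : ∀ (y y' : EuclideanSpace ℝ (Fin m)) (z : EuclideanSpace ℝ (Fin m × Fin d)),
      ⟪y - y', f y z - f y' z⟫ ≤ -lY * ‖y - y'‖ ^ 2)
    -- (fLz): Lipschitz continuity in z
    (hfLz : ∀ (y : EuclideanSpace ℝ (Fin m)) (z z' : EuclideanSpace ℝ (Fin m × Fin d)),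
      ‖f y z - f y z'‖ ≤ LZ * ‖z - z'‖)
    -- the stability condition Λ (L^Z)² ≤ 2 l^Y
    (hcond : Lam * LZ ^ 2 ≤ 2 * lY)
    -- the terminal condition
    (ξ : Ω → EuclideanSpace ℝ (Fin m))
    (hξ_meas : Measurable[F (Fin.last n)] ξ) (hξ_bdd : MemLp ξ ⊤ μ)
    -- the scheme
    (Y : Fin (n + 1) → Ω → EuclideanSpace ℝ (Fin m))
    (Z : Fin n → Ω → EuclideanSpace ℝ (Fin m × Fin d))
    (hY_L2 : ∀ i, MemLp (Y i) 2 μ) (hZ_L2 : ∀ i, MemLp (Z i) 2 μ)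
    (hY_final : Y (Fin.last n) =ᵐ[μ] ξ)
    (hZ_def : ∀ (i : Fin n) (k : Fin m) (l : Fin d),
      (fun ω => Z i ω (k, l)) =ᵐ[μ] μ[fun ω => Y i.succ ω k * H i ω l|F i.castSucc])
    (hY_def : ∀ i : Fin n, Y i.castSucc =ᵐ[μ]
      μ[fun ω => Y i.succ ω + (t i.succ - t i.castSucc) • f (Y i.castSucc ω) (Z i ω)|
        F i.castSucc]) :
    ∀ i : Fin (n + 1), ∀ᵐ ω ∂μ, ‖Y i ω‖ ≤ (eLpNorm ξ ⊤ μ).toReal := by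
  classical
  set M := (eLpNorm ξ ⊤ μ).toReal with hMdef
  have hM0 : 0 ≤ M := ENNReal.toReal_nonneg
  have hξM : ∀ᵐ ω ∂μ, ‖ξ ω‖ ≤ M := by
    have h1 := enorm_ae_le_eLpNormEssSup ξ μ
    have h2 : eLpNormEssSup ξ μ ≠ ⊤ := by
      rw [← eLpNorm_exponent_top]; exact hξ_bdd.2.ne
    filter_upwards [h1] with ω hω
    have h3 := ENNReal.toReal_mono h2 hω
    simpa [hMdef, eLpNorm_exponent_top] using h3
  intro i
  induction i using Fin.reverseInduction with
  | last =>
    filter_upwards [hY_final, hξM] with ω h1 h2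
    rw [h1]; exact h2
  | cast i IH =>
    have hF' : F i.castSucc ≤ ‹MeasurableSpace Ω› := hF_le _
    have hstep : 0 < t i.succ - t i.castSucc := sub_pos.2 (ht (Fin.castSucc_lt_succ (i := i)))
    have dpos : (0:ℝ) < (d:ℝ) := by exact_mod_cast Nat.lt_of_lt_of_le Nat.zero_lt_one hd
    have hY'as : AEStronglyMeasurable (Y i.succ) μ := (hY_L2 i.succ).aestronglyMeasurable
    have hY'int : Integrable (Y i.succ) μ := (hY_L2 i.succ).integrable one_le_two
    rcases em (Integrable
        (fun ω => Y i.succ ω + (t i.succ - t i.castSucc) • f (Y i.castSucc ω) (Z i ω)) μ)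
      with hGint | hGint
    swap
    · have h0 : Y i.castSucc =ᵐ[μ] 0 := (hY_def i).trans (by rw [condExp_of_not_integrable hGint])
      filter_upwards [h0] with ω hω
      rw [hω]
      simpa using hM0
    -- Main case: the defining conditional expectation is of an integrable function.
    have hfYint : Integrable (fun ω => f (Y i.castSucc ω) (Z i ω)) μ := by
      have h1 : Integrable
          (fun ω => (t i.succ - t i.castSucc) • f (Y i.castSucc ω) (Z i ω)) μ := by
        have h2 := hGint.sub hY'int
        have h4 : ((fun ω => Y i.succ ω + (t i.succ - t i.castSucc) • f (Y i.castSucc ω) (Z i ω))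
            - Y i.succ) = fun ω => (t i.succ - t i.castSucc) • f (Y i.castSucc ω) (Z i ω) := by
          funext ω
          simp
        rwa [h4] at h2
      have h2 := h1.smul (t i.succ - t i.castSucc)⁻¹
      have h3 : ((t i.succ - t i.castSucc)⁻¹ •
          fun ω => (t i.succ - t i.castSucc) • f (Y i.castSucc ω) (Z i ω))
          = fun ω => f (Y i.castSucc ω) (Z i ω) := by
        funext ω
        simp [smul_smul, inv_mul_cancel₀ hstep.ne']
      rwa [h3] at h2
    have hYm : AEStronglyMeasurable[F i.castSucc] (Y i.castSucc) μ :=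
      AEStronglyMeasurable.congr stronglyMeasurable_condExp.aestronglyMeasurable
        (hY_def i).symm
    have hZm : AEStronglyMeasurable[F i.castSucc] (Z i) μ := by
      apply aesm'_euclidean
      rintro ⟨k, l⟩
      exact AEStronglyMeasurable.congr stronglyMeasurable_condExp.aestronglyMeasurable
        (hZ_def i k l).symm
    have hfYm : AEStronglyMeasurable[F i.castSucc]
        (fun ω => f (Y i.castSucc ω) (Z i ω)) μ := by
      obtain ⟨gY, hgYm, hgYe⟩ := hYm
      obtain ⟨gZ, hgZm, hgZe⟩ := hZm
      refine ⟨fun ω => f (gY ω) (gZ ω),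
        hf_cont.comp_stronglyMeasurable (hgYm.prodMk hgZm), ?_⟩
      filter_upwards [hgYe, hgZe] with ω h1 h2
      rw [h1, h2]
    -- the key pointwise identity
    have hKey : ∀ᵐ ω ∂μ, Y i.castSucc ω = (μ[Y i.succ|F i.castSucc]) ω
        + (t i.succ - t i.castSucc) • f (Y i.castSucc ω) (Z i ω) := by
      have hsm : Integrable
          ((t i.succ - t i.castSucc) • fun ω => f (Y i.castSucc ω) (Z i ω)) μ :=
        hfYint.smul _
      have heq : (fun ω => Y i.succ ω + (t i.succ - t i.castSucc) • f (Y i.castSucc ω) (Z i ω))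
          = Y i.succ + ((t i.succ - t i.castSucc) • fun ω => f (Y i.castSucc ω) (Z i ω)) := rfl
      have h0 := hY_def i
      rw [heq] at h0
      have h1 := condExp_add (μ := μ) (m := F i.castSucc) hY'int hsm
      have h2 := condExp_smul (μ := μ) (m := F i.castSucc) (t i.succ - t i.castSucc)
        (fun ω => f (Y i.castSucc ω) (Z i ω))
      have h3 := condExp_of_aestronglyMeasurable' hF' hfYm hfYint
      filter_upwards [h0, h1, h2, h3] with ω e0 e1 e2 e3
      conv_lhs => rw [e0]
      rw [e1]
      simp only [Pi.add_apply]
      rw [e2]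
      simp only [Pi.smul_apply]
      rw [e3]
    -- coordinates of the conditional expectation of Y'
    have he_sm : StronglyMeasurable[F i.castSucc] (μ[Y i.succ|F i.castSucc]) :=
      stronglyMeasurable_condExp
    have hek_sm : ∀ k : Fin m,
        StronglyMeasurable[F i.castSucc] (fun ω => (μ[Y i.succ|F i.castSucc]) ω k) := fun k =>
      (EuclideanSpace.proj (𝕜 := ℝ) k).continuous.comp_stronglyMeasurable he_sm
    have hek_ae : ∀ k : Fin m, (fun ω => (μ[Y i.succ|F i.castSucc]) ω k)
        =ᵐ[μ] μ[fun ω => Y i.succ ω k|F i.castSucc] := fun k =>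
      condexp_clm hF' (EuclideanSpace.proj (𝕜 := ℝ) k) hY'int
    have hY'k_bdd : ∀ k : Fin m, ∀ᵐ ω ∂μ, |Y i.succ ω k| ≤ M := fun k => by
      filter_upwards [IH] with ω hω
      exact (coord_le_norm _ _).trans hω
    have hek_bdd : ∀ k : Fin m, ∀ᵐ ω ∂μ, |(μ[Y i.succ|F i.castSucc]) ω k| ≤ M := fun k => by
      have hb : ∀ᵐ ω ∂μ, |Y i.succ ω k| ≤ ((⟨M, hM0⟩ : ℝ≥0) : ℝ) := by
        simpa using hY'k_bdd k
      have h1 := ae_bdd_condExp_of_ae_bdd (m := F i.castSucc) hb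
      filter_upwards [hek_ae k, h1] with ω e1 e2
      rw [e1]
      exact e2
    have hY'k_as : ∀ k : Fin m, AEStronglyMeasurable (fun ω => Y i.succ ω k) μ :=
      fun k => (EuclideanSpace.proj (𝕜 := ℝ) k).continuous.comp_aestronglyMeasurable hY'as
    have hY'k_int : ∀ k : Fin m, Integrable (fun ω => Y i.succ ω k) μ := fun k =>
      (memLp_top_of_bound (hY'k_as k) M
        (by simpa [Real.norm_eq_abs] using hY'k_bdd k)).integrable le_top
    have hek_as : ∀ k : Fin m,
        AEStronglyMeasurable (fun ω => (μ[Y i.succ|F i.castSucc]) ω k) μ :=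
      fun k => ((hek_sm k).mono hF').aestronglyMeasurable
    have hek_int : ∀ k : Fin m, Integrable (fun ω => (μ[Y i.succ|F i.castSucc]) ω k) μ :=
      fun k => (memLp_top_of_bound (hek_as k) M
        (by simpa [Real.norm_eq_abs] using hek_bdd k)).integrable le_top
    have hWk_as : ∀ k : Fin m, AEStronglyMeasurable
        (fun ω => Y i.succ ω k - (μ[Y i.succ|F i.castSucc]) ω k) μ :=
      fun k => (hY'k_as k).sub (hek_as k)
    have hWk_bdd : ∀ k : Fin m, ∀ᵐ ω ∂μ,
        |Y i.succ ω k - (μ[Y i.succ|F i.castSucc]) ω k| ≤ 2*M := fun k => by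
      filter_upwards [hY'k_bdd k, hek_bdd k] with ω h1 h2
      rw [abs_le] at h1 h2 ⊢
      constructor <;> linarith [h1.1, h1.2, h2.1, h2.2]
    -- components of H
    have hHint : Integrable (H i) μ := (hH_L2 i).integrable one_le_two
    have hHl_L2 : ∀ l : Fin d, MemLp (fun ω => H i ω l) 2 μ := fun l => by
      have h1 := (EuclideanSpace.proj (𝕜 := ℝ) l).comp_memLp' (hH_L2 i)
      exact h1
    have hHl_int : ∀ l : Fin d, Integrable (fun ω => H i ω l) μ :=
      fun l => (hHl_L2 l).integrable one_le_two
    have hHl_mean : ∀ l : Fin d,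
        μ[fun ω => H i ω l|F i.castSucc] =ᵐ[μ] fun _ => (0:ℝ) := fun l => by
      have h2 : (fun ω => (μ[H i|F i.castSucc]) ω l)
          =ᵐ[μ] μ[fun ω => H i ω l|F i.castSucc] :=
        condexp_clm hF' (EuclideanSpace.proj (𝕜 := ℝ) l) hHint
      refine h2.symm.trans ?_
      filter_upwards [hH_mean i] with ω e2
      rw [e2]
      simp
    -- conditional variance of the components of H is constant
    have hcipos : 0 < c i := lt_of_lt_of_le (div_pos hlam dpos) (hc i).1
    have hσpos : 0 < c i / (t i.succ - t i.castSucc) := div_pos hcipos hstep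
    have hvar : ∀ l : Fin d, μ[fun ω => H i ω l * H i ω l|F i.castSucc]
        =ᵐ[μ] fun _ => c i / (t i.succ - t i.castSucc) := fun l => by
      have h1 := hH_cov i l l
      rw [if_pos rfl] at h1
      filter_upwards [h1] with ω hω
      rw [eq_div_iff hstep.ne']
      linarith [hω]
    -- integrability of products
    have int_YkHl : ∀ (k : Fin m) (l : Fin d),
        Integrable (fun ω => Y i.succ ω k * H i ω l) μ := fun k l =>
      (hHl_int l).bdd_mul (hY'k_as k) (by simpa [Real.norm_eq_abs] using hY'k_bdd k)
    have int_ekHl : ∀ (k : Fin m) (l : Fin d),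
        Integrable (fun ω => (μ[Y i.succ|F i.castSucc]) ω k * H i ω l) μ := fun k l =>
      (hHl_int l).bdd_mul (hek_as k) (by simpa [Real.norm_eq_abs] using hek_bdd k)
    have int_ekYk : ∀ k : Fin m,
        Integrable (fun ω => (μ[Y i.succ|F i.castSucc]) ω k * Y i.succ ω k) μ := fun k =>
      (hY'k_int k).bdd_mul (hek_as k) (by simpa [Real.norm_eq_abs] using hek_bdd k)
    have int_ekek : ∀ k : Fin m, Integrable
        (fun ω => (μ[Y i.succ|F i.castSucc]) ω k * (μ[Y i.succ|F i.castSucc]) ω k) μ := fun k =>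
      (hek_int k).bdd_mul (hek_as k) (by simpa [Real.norm_eq_abs] using hek_bdd k)
    have int_YkYk : ∀ k : Fin m,
        Integrable (fun ω => Y i.succ ω k * Y i.succ ω k) μ := fun k =>
      (hY'k_int k).bdd_mul (hY'k_as k) (by simpa [Real.norm_eq_abs] using hY'k_bdd k)
    -- conditional Cauchy-Schwarz for each component
    have hCS : ∀ (k : Fin m) (l : Fin d), ∀ᵐ ω ∂μ,
        ((μ[fun ω => (Y i.succ ω k - (μ[Y i.succ|F i.castSucc]) ω k) * H i ω l|
            F i.castSucc]) ω)^2
          ≤ (c i / (t i.succ - t i.castSucc)) *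
            ((μ[fun ω => (Y i.succ ω k - (μ[Y i.succ|F i.castSucc]) ω k) *
              (Y i.succ ω k - (μ[Y i.succ|F i.castSucc]) ω k)|F i.castSucc]) ω) :=
      fun k l => condexp_CS hF' (hWk_as k) (hWk_bdd k) (hHl_L2 l) hσpos (hvar l)
    -- identification of Z with the conditional covariance
    have hZeq : ∀ (k : Fin m) (l : Fin d), ∀ᵐ ω ∂μ, Z i ω (k, l) =
        (μ[fun ω => (Y i.succ ω k - (μ[Y i.succ|F i.castSucc]) ω k) * H i ω l|
          F i.castSucc]) ω := fun k l => by
      have hsplit : μ[fun ω => (Y i.succ ω k - (μ[Y i.succ|F i.castSucc]) ω k) * H i ω l|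
            F i.castSucc] =ᵐ[μ]
          μ[fun ω => Y i.succ ω k * H i ω l|F i.castSucc]
            - μ[fun ω => (μ[Y i.succ|F i.castSucc]) ω k * H i ω l|F i.castSucc] := by
        have heq2 : (fun ω => (Y i.succ ω k - (μ[Y i.succ|F i.castSucc]) ω k) * H i ω l)
            = (fun ω => Y i.succ ω k * H i ω l)
              - fun ω => (μ[Y i.succ|F i.castSucc]) ω k * H i ω l := by
          funext ω
          simp only [Pi.sub_apply]
          ring
        rw [heq2]
        exact condExp_sub (int_YkHl k l) (int_ekHl k l) _
      have hpull : μ[fun ω => (μ[Y i.succ|F i.castSucc]) ω k * H i ω l|F i.castSucc]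
          =ᵐ[μ] (fun ω => (μ[Y i.succ|F i.castSucc]) ω k)
            * μ[fun ω => H i ω l|F i.castSucc] :=
        condExp_mul_of_stronglyMeasurable_left (hek_sm k) (int_ekHl k l) (hHl_int l)
      filter_upwards [hZ_def i k l, hsplit, hpull, hHl_mean l] with ω e1 e2 e3 e4
      rw [e2]
      simp only [Pi.sub_apply]
      rw [e3]
      simp only [Pi.mul_apply]
      rw [e4]
      simpa using e1
    -- conditional variance decomposition for each component of Y'
    have hAk : ∀ k : Fin m, ∀ᵐ ω ∂μ,
        (μ[fun ω => (Y i.succ ω k - (μ[Y i.succ|F i.castSucc]) ω k) *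
            (Y i.succ ω k - (μ[Y i.succ|F i.castSucc]) ω k)|F i.castSucc]) ω
          = (μ[fun ω => Y i.succ ω k * Y i.succ ω k|F i.castSucc]) ω
            - (μ[Y i.succ|F i.castSucc]) ω k * (μ[Y i.succ|F i.castSucc]) ω k := fun k => by
      have heq2 : (fun ω => (Y i.succ ω k - (μ[Y i.succ|F i.castSucc]) ω k) *
            (Y i.succ ω k - (μ[Y i.succ|F i.castSucc]) ω k))
          = ((fun ω => Y i.succ ω k * Y i.succ ω k)
              - (2:ℝ) • fun ω => (μ[Y i.succ|F i.castSucc]) ω k * Y i.succ ω k)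
            + fun ω => (μ[Y i.succ|F i.castSucc]) ω k * (μ[Y i.succ|F i.castSucc]) ω k := by
        funext ω
        simp only [Pi.add_apply, Pi.sub_apply, Pi.smul_apply, smul_eq_mul]
        ring
      rw [heq2]
      have h1 := condExp_add (μ := μ) (m := F i.castSucc)
        ((int_YkYk k).sub ((int_ekYk k).smul (2:ℝ))) (int_ekek k)
      have h2 := condExp_sub (μ := μ) (m := F i.castSucc) (int_YkYk k)
        ((int_ekYk k).smul (2:ℝ))
      have h3 := condExp_smul (μ := μ) (m := F i.castSucc) (2:ℝ)
        (fun ω => (μ[Y i.succ|F i.castSucc]) ω k * Y i.succ ω k)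
      have h4 : μ[fun ω => (μ[Y i.succ|F i.castSucc]) ω k * Y i.succ ω k|F i.castSucc]
          =ᵐ[μ] (fun ω => (μ[Y i.succ|F i.castSucc]) ω k)
            * μ[fun ω => Y i.succ ω k|F i.castSucc] :=
        condExp_mul_of_stronglyMeasurable_left (hek_sm k) (int_ekYk k) (hY'k_int k)
      have h5 : μ[fun ω => (μ[Y i.succ|F i.castSucc]) ω k *
            (μ[Y i.succ|F i.castSucc]) ω k|F i.castSucc]
          = fun ω => (μ[Y i.succ|F i.castSucc]) ω k * (μ[Y i.succ|F i.castSucc]) ω k :=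
        condExp_of_stronglyMeasurable hF' ((hek_sm k).mul (hek_sm k)) (int_ekek k)
      filter_upwards [h1, h2, h3, h4, hek_ae k] with ω e1 e2 e3 e4 e5
      rw [e1]
      simp only [Pi.add_apply, Pi.sub_apply]
      rw [e2, h5]
      simp only [Pi.sub_apply]
      rw [e3]
      simp only [Pi.smul_apply, smul_eq_mul]
      rw [e4]
      simp only [Pi.mul_apply]
      rw [← e5]
      ring
    -- nonnegativity of the conditional variances
    have hAnn : ∀ k : Fin m, ∀ᵐ ω ∂μ,
        0 ≤ (μ[fun ω => (Y i.succ ω k - (μ[Y i.succ|F i.castSucc]) ω k) *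
          (Y i.succ ω k - (μ[Y i.succ|F i.castSucc]) ω k)|F i.castSucc]) ω := fun k => by
      have h1 := condExp_nonneg (μ := μ) (m := F i.castSucc)
        (f := fun ω => (Y i.succ ω k - (μ[Y i.succ|F i.castSucc]) ω k) *
          (Y i.succ ω k - (μ[Y i.succ|F i.castSucc]) ω k))
        (Filter.Eventually.of_forall fun ω => mul_self_nonneg _)
      filter_upwards [h1] with ω hω
      simpa using hω
    -- sum of conditional second moments is bounded by M²
    have hsum_bdd : ∀ᵐ ω ∂μ,
        ∑ k : Fin m, (μ[fun ω => Y i.succ ω k * Y i.succ ω k|F i.castSucc]) ω ≤ M^2 := by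
      have hle : (fun ω => ∑ k : Fin m, Y i.succ ω k * Y i.succ ω k) ≤ᵐ[μ]
          fun _ => M^2 := by
        filter_upwards [IH] with ω hω
        have h1 : ∑ k : Fin m, Y i.succ ω k * Y i.succ ω k = ‖Y i.succ ω‖^2 := by
          rw [norm_sq_eq]
          exact Finset.sum_congr rfl fun k _ => by ring
        rw [h1]
        nlinarith [norm_nonneg (Y i.succ ω), hω, hM0]
      have hintsum : Integrable (fun ω => ∑ k : Fin m, Y i.succ ω k * Y i.succ ω k) μ := by
        have h1 := integrable_finset_sum (μ := μ) (s := (Finset.univ : Finset (Fin m)))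
          (f := fun k ω => Y i.succ ω k * Y i.succ ω k) (fun k _ => int_YkYk k)
        simpa using h1
      have h1 := condExp_mono (μ := μ) (m := F i.castSucc) hintsum
        (integrable_const (M^2)) hle
      rw [condExp_const hF' (M^2)] at h1
      have h2 : μ[fun ω => ∑ k : Fin m, Y i.succ ω k * Y i.succ ω k|F i.castSucc] =ᵐ[μ]
          fun ω => ∑ k : Fin m,
            (μ[fun ω => Y i.succ ω k * Y i.succ ω k|F i.castSucc]) ω := by
        have h3 := condExp_finsetSum (μ := μ) (m := F i.castSucc)
          (s := (Finset.univ : Finset (Fin m)))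
          (f := fun k ω => Y i.succ ω k * Y i.succ ω k) (fun k _ => int_YkYk k)
        have h4 : (∑ k : Fin m, fun ω => Y i.succ ω k * Y i.succ ω k)
            = fun ω => ∑ k : Fin m, Y i.succ ω k * Y i.succ ω k := by
          funext ω
          simp [Finset.sum_apply]
        rw [h4] at h3
        refine h3.trans ?_
        refine Filter.Eventually.of_forall fun ω => ?_
        simp [Finset.sum_apply]
      filter_upwards [h1, h2] with ω e1 e2
      rw [← e2]
      exact e1
    -- the bound on Z
    have hZb : ∀ᵐ ω ∂μ, (t i.succ - t i.castSucc) * ‖Z i ω‖^2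
        ≤ Lam * (M^2 - ‖(μ[Y i.succ|F i.castSucc]) ω‖^2) := by
      have hCS' := ae_all_iff.2 fun k : Fin m => ae_all_iff.2 fun l : Fin d => hCS k l
      have hZeq' := ae_all_iff.2 fun k : Fin m => ae_all_iff.2 fun l : Fin d => hZeq k l
      have hAk' := ae_all_iff.2 hAk
      have hAnn' := ae_all_iff.2 hAnn
      filter_upwards [hCS', hZeq', hAk', hAnn', hsum_bdd] with ω hcs hzeq hak hann hsum
      have hZnorm : ‖Z i ω‖^2 = ∑ k : Fin m, ∑ l : Fin d, (Z i ω (k, l))^2 := by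
        rw [norm_sq_eq]
        exact Fintype.sum_prod_type (f := fun p : Fin m × Fin d => (Z i ω p)^2)
      have hstep1 : ‖Z i ω‖^2 ≤ ∑ k : Fin m, ∑ l : Fin d,
          (c i / (t i.succ - t i.castSucc)) *
            ((μ[fun ω => (Y i.succ ω k - (μ[Y i.succ|F i.castSucc]) ω k) *
              (Y i.succ ω k - (μ[Y i.succ|F i.castSucc]) ω k)|F i.castSucc]) ω) := by
        rw [hZnorm]
        refine Finset.sum_le_sum fun k _ => Finset.sum_le_sum fun l _ => ?_
        rw [hzeq k l]
        exact hcs k l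
      have hstep2 : ∑ k : Fin m, ∑ l : Fin d,
          (c i / (t i.succ - t i.castSucc)) *
            ((μ[fun ω => (Y i.succ ω k - (μ[Y i.succ|F i.castSucc]) ω k) *
              (Y i.succ ω k - (μ[Y i.succ|F i.castSucc]) ω k)|F i.castSucc]) ω)
          = (d:ℝ) * (c i / (t i.succ - t i.castSucc)) * ∑ k : Fin m,
            (μ[fun ω => (Y i.succ ω k - (μ[Y i.succ|F i.castSucc]) ω k) *
              (Y i.succ ω k - (μ[Y i.succ|F i.castSucc]) ω k)|F i.castSucc]) ω := by
        rw [Finset.mul_sum]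
        refine Finset.sum_congr rfl fun k _ => ?_
        rw [Finset.sum_const]
        simp [Finset.card_univ]
        ring
      have hsumA_nn : 0 ≤ ∑ k : Fin m,
          (μ[fun ω => (Y i.succ ω k - (μ[Y i.succ|F i.castSucc]) ω k) *
            (Y i.succ ω k - (μ[Y i.succ|F i.castSucc]) ω k)|F i.castSucc]) ω :=
        Finset.sum_nonneg fun k _ => hann k
      have hsumA_le : ∑ k : Fin m,
          (μ[fun ω => (Y i.succ ω k - (μ[Y i.succ|F i.castSucc]) ω k) *
            (Y i.succ ω k - (μ[Y i.succ|F i.castSucc]) ω k)|F i.castSucc]) ω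
          ≤ M^2 - ‖(μ[Y i.succ|F i.castSucc]) ω‖^2 := by
        have h1 : ∑ k : Fin m,
            (μ[fun ω => (Y i.succ ω k - (μ[Y i.succ|F i.castSucc]) ω k) *
              (Y i.succ ω k - (μ[Y i.succ|F i.castSucc]) ω k)|F i.castSucc]) ω
            = (∑ k : Fin m, (μ[fun ω => Y i.succ ω k * Y i.succ ω k|F i.castSucc]) ω)
              - ∑ k : Fin m, (μ[Y i.succ|F i.castSucc]) ω k * (μ[Y i.succ|F i.castSucc]) ω k := by
          rw [← Finset.sum_sub_distrib]
          exact Finset.sum_congr rfl fun k _ => hak k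
        have h2 : ‖(μ[Y i.succ|F i.castSucc]) ω‖^2
            = ∑ k : Fin m, (μ[Y i.succ|F i.castSucc]) ω k * (μ[Y i.succ|F i.castSucc]) ω k := by
          rw [norm_sq_eq]
          exact Finset.sum_congr rfl fun k _ => by ring
        rw [h1, h2]
        linarith [hsum]
      have hdc : (d:ℝ) * c i ≤ Lam := by
        have h1 := (hc i).2
        rw [le_div_iff₀ dpos] at h1
        linarith
      calc (t i.succ - t i.castSucc) * ‖Z i ω‖^2
          ≤ (t i.succ - t i.castSucc) * ((d:ℝ) * (c i / (t i.succ - t i.castSucc)) *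
            ∑ k : Fin m, (μ[fun ω => (Y i.succ ω k - (μ[Y i.succ|F i.castSucc]) ω k) *
              (Y i.succ ω k - (μ[Y i.succ|F i.castSucc]) ω k)|F i.castSucc]) ω) := by
            refine mul_le_mul_of_nonneg_left ?_ hstep.le
            rw [← hstep2]
            exact hstep1
        _ = (d:ℝ) * c i * ∑ k : Fin m,
            (μ[fun ω => (Y i.succ ω k - (μ[Y i.succ|F i.castSucc]) ω k) *
              (Y i.succ ω k - (μ[Y i.succ|F i.castSucc]) ω k)|F i.castSucc]) ω := by
            field_simp
        _ ≤ Lam * ∑ k : Fin m,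
            (μ[fun ω => (Y i.succ ω k - (μ[Y i.succ|F i.castSucc]) ω k) *
              (Y i.succ ω k - (μ[Y i.succ|F i.castSucc]) ω k)|F i.castSucc]) ω :=
            mul_le_mul_of_nonneg_right hdc hsumA_nn
        _ ≤ Lam * (M^2 - ‖(μ[Y i.succ|F i.castSucc]) ω‖^2) :=
            mul_le_mul_of_nonneg_left hsumA_le hLam.le
    -- the inner product estimate
    have hIP : ∀ᵐ ω ∂μ, ‖Y i.castSucc ω‖^2
        ≤ ‖Y i.castSucc ω‖ * ‖(μ[Y i.succ|F i.castSucc]) ω‖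
          + (t i.succ - t i.castSucc) *
            (-lY * ‖Y i.castSucc ω‖^2 + LZ * ‖Y i.castSucc ω‖ * ‖Z i ω‖) := by
      filter_upwards [hKey] with ω hω
      have h1 : ‖Y i.castSucc ω‖^2 = ⟪Y i.castSucc ω, (μ[Y i.succ|F i.castSucc]) ω⟫
          + (t i.succ - t i.castSucc) * ⟪Y i.castSucc ω, f (Y i.castSucc ω) (Z i ω)⟫ := by
        conv_lhs => rw [← real_inner_self_eq_norm_sq]
        nth_rewrite 2 [hω]
        rw [inner_add_right, real_inner_smul_right]
      have h2 : ⟪Y i.castSucc ω, (μ[Y i.succ|F i.castSucc]) ω⟫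
          ≤ ‖Y i.castSucc ω‖ * ‖(μ[Y i.succ|F i.castSucc]) ω‖ := real_inner_le_norm _ _
      have h3 : ⟪Y i.castSucc ω, f (Y i.castSucc ω) (Z i ω)⟫
          ≤ -lY * ‖Y i.castSucc ω‖^2 + LZ * ‖Y i.castSucc ω‖ * ‖Z i ω‖ := by
        have hmono := hfmy (Y i.castSucc ω) 0 (Z i ω)
        simp only [sub_zero] at hmono
        have hsplit : ⟪Y i.castSucc ω, f (Y i.castSucc ω) (Z i ω)⟫
            = ⟪Y i.castSucc ω, f (Y i.castSucc ω) (Z i ω) - f 0 (Z i ω)⟫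
              + ⟪Y i.castSucc ω, f 0 (Z i ω)⟫ := by
          rw [inner_sub_right]
          ring
        have h4 : ⟪Y i.castSucc ω, f 0 (Z i ω)⟫
            ≤ ‖Y i.castSucc ω‖ * (LZ * ‖Z i ω‖) := by
          refine (real_inner_le_norm _ _).trans ?_
          have h5 : ‖f 0 (Z i ω)‖ ≤ LZ * ‖Z i ω‖ := by
            have h6 := hfLz 0 (Z i ω) 0
            simpa [hf0] using h6
          exact mul_le_mul_of_nonneg_left h5 (norm_nonneg _)
        rw [hsplit]
        linarith [hmono, h4]
      have h7 := mul_le_mul_of_nonneg_left h3 hstep.le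
      linarith [h1, h2, h7]
    -- conclusion via the elementary inequality
    filter_upwards [hIP, hZb] with ω h1 h2
    exact final_ineq (norm_nonneg _) (norm_nonneg _) (norm_nonneg _) hstep hM0 hlY hLZ hLam
      hcond h1 h2
end

section
/- Let m = 1 and consider the implicit scheme (θ = 1). Assume hypothesis (fmy) holds with l^Y ≥ 0, hypothesis (fLz) holds with constant L^Z, each H_i is essentially bounded, and h · L^Z · max_{0 ≤ i ≤ n−1} ‖ |H_i| ‖_∞ ≤ 1. Then for every essentially bounded terminal condition ξ and every 0 ≤ i ≤ n, |Y_i| ≤ ‖ξ‖_∞ almost surely; in particular |Y_0| ≤ ‖ξ‖_∞ almost surely. -/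
open MeasureTheory

lemma euclid_inner_sum {d : ℕ} (x y : EuclideanSpace ℝ (Fin d)) :
    (inner ℝ x y : ℝ) = ∑ k, x k * y k := by
  simp [PiLp.inner_apply, RCLike.inner_apply, conj_trivial, mul_comm]

lemma euclid_abs_coord_le_norm {d : ℕ} (x : EuclideanSpace ℝ (Fin d)) (k : Fin d) :
    |x k| ≤ ‖x‖ := by
  rw [EuclideanSpace.norm_eq, ← Real.sqrt_sq_eq_abs]
  apply Real.sqrt_le_sqrt
  have h : (x k) ^ 2 = ‖x k‖ ^ 2 := by rw [Real.norm_eq_abs, sq_abs]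
  rw [h]
  exact Finset.single_le_sum (f := fun i => ‖x i‖ ^ 2) (fun i _ => by positivity)
    (Finset.mem_univ k)

open Classical in
noncomputable def gA {d : ℕ} (f : ℝ → EuclideanSpace ℝ (Fin d) → ℝ) (y : ℝ)
    (z : EuclideanSpace ℝ (Fin d)) : EuclideanSpace ℝ (Fin d) :=
  if z = 0 then 0 else (‖z‖ ^ 2)⁻¹ • ((f y z - f y 0) • z)

lemma gA_measurable {d : ℕ} (f : ℝ → EuclideanSpace ℝ (Fin d) → ℝ)
    (hf_cont : Continuous fun p : ℝ × EuclideanSpace ℝ (Fin d) => f p.1 p.2) :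
    Measurable fun p : ℝ × EuclideanSpace ℝ (Fin d) => gA f p.1 p.2 := by
  unfold gA
  have h2 : Continuous fun p : ℝ × EuclideanSpace ℝ (Fin d) => f p.1 0 :=
    hf_cont.comp (continuous_fst.prodMk continuous_const)
  refine Measurable.ite ?_ measurable_const ?_
  · exact measurable_snd (measurableSet_singleton 0)
  · exact ((measurable_snd.norm.pow_const 2).inv).smul
      ((hf_cont.measurable.sub h2.measurable).smul measurable_snd)

lemma gA_norm_le {d : ℕ} (f : ℝ → EuclideanSpace ℝ (Fin d) → ℝ) {LZ : ℝ} (hLZ : 0 ≤ LZ)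
    (hfLz : ∀ (y : ℝ) (z z' : EuclideanSpace ℝ (Fin d)), |f y z - f y z'| ≤ LZ * ‖z - z'‖)
    (y : ℝ) (z : EuclideanSpace ℝ (Fin d)) : ‖gA f y z‖ ≤ LZ := by
  unfold gA
  by_cases h : z = 0
  · simp [h, hLZ]
  · have hz : (0:ℝ) < ‖z‖ := norm_pos_iff.mpr h
    have hfb : |f y z - f y 0| ≤ LZ * ‖z‖ := by simpa using hfLz y z 0
    have hpos : (0:ℝ) ≤ (‖z‖ ^ 2)⁻¹ := by positivity
    rw [if_neg h, norm_smul, norm_smul, Real.norm_eq_abs, Real.norm_eq_abs,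
      abs_of_nonneg hpos]
    rw [inv_mul_le_iff₀ (by positivity)]
    nlinarith [hz.le, hfb, abs_nonneg (f y z - f y 0)]

lemma gA_inner {d : ℕ} (f : ℝ → EuclideanSpace ℝ (Fin d) → ℝ) (y : ℝ)
    (z : EuclideanSpace ℝ (Fin d)) : (inner ℝ (gA f y z) z : ℝ) = f y z - f y 0 := by
  unfold gA
  by_cases h : z = 0
  · simp [h]
  · have hz : (0:ℝ) < ‖z‖ := norm_pos_iff.mpr h
    rw [if_neg h, real_inner_smul_left, real_inner_smul_left, real_inner_self_eq_norm_sq]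
    field_simp

set_option maxHeartbeats 2000000 in
lemma step_lemma {Ω : Type*} {m2 : MeasurableSpace Ω} [m0 : MeasurableSpace Ω] (hm : m2 ≤ m0)
    (μ : Measure Ω) [IsProbabilityMeasure μ]
    {d : ℕ}
    (f : ℝ → EuclideanSpace ℝ (Fin d) → ℝ)
    (hf_cont : Continuous fun p : ℝ × EuclideanSpace ℝ (Fin d) => f p.1 p.2)
    (hf0 : f 0 0 = 0)
    {lY LZ : ℝ} (hlY : 0 ≤ lY) (hLZ : 0 ≤ LZ)
    (hfmy : ∀ y y' z, (y - y') * (f y z - f y' z) ≤ -lY * |y - y'| ^ 2)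
    (hfLz : ∀ y z z', |f y z - f y z'| ≤ LZ * ‖z - z'‖)
    {hi M C : ℝ} (hhi : 0 < hi) (hM : 0 ≤ M) (hC : 0 ≤ C)
    (hcond1 : hi * (LZ * C) ≤ 1)
    {Y1 Y0 : Ω → ℝ} {Z H : Ω → EuclideanSpace ℝ (Fin d)}
    (hY1_int : Integrable Y1 μ)
    (hY1_bdd : ∀ᵐ ω ∂μ, |Y1 ω| ≤ M)
    (hH_int : Integrable H μ)
    (hHC : ∀ᵐ ω ∂μ, ‖H ω‖ ≤ C)
    (hH_mean : ∀ k, μ[fun ω => H ω k | m2] =ᵐ[μ] 0)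
    (hZ_int : Integrable Z μ)
    (hZ : ∀ k, (fun ω => Z ω k) =ᵐ[μ] μ[fun ω => Y1 ω * H ω k | m2])
    (hY0 : Y0 =ᵐ[μ] μ[fun ω => Y1 ω + hi * f (Y0 ω) (Z ω) | m2]) :
    ∀ᵐ ω ∂μ, |Y0 ω| ≤ M := by
  classical
  by_cases hInt : Integrable (fun ω => Y1 ω + hi * f (Y0 ω) (Z ω)) μ
  swap
  · rw [condExp_of_not_integrable hInt] at hY0
    filter_upwards [hY0] with ω hω
    rw [hω]
    simpa using hM
  -- integrability of the driver term
  have hφ_int : Integrable (fun ω => f (Y0 ω) (Z ω)) μ := by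
    have h1 : Integrable (fun ω => hi * f (Y0 ω) (Z ω)) μ := by
      have h0 := hInt.sub hY1_int
      have : ((fun ω => Y1 ω + hi * f (Y0 ω) (Z ω)) - Y1) = fun ω => hi * f (Y0 ω) (Z ω) := by
        funext ω; simp
      rwa [this] at h0
    have h2 := h1.const_mul hi⁻¹
    have h3 : (fun ω => hi⁻¹ * (hi * f (Y0 ω) (Z ω))) = fun ω => f (Y0 ω) (Z ω) := by
      funext ω; field_simp
    rwa [h3] at h2
  set φ : Ω → ℝ := fun ω => f (Y0 ω) (Z ω) with hφdef
  -- m2-measurable versions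
  have hY0m : AEStronglyMeasurable[m2] Y0 μ :=
    AEStronglyMeasurable.congr stronglyMeasurable_condExp.aestronglyMeasurable hY0.symm
  set Zt : Ω → EuclideanSpace ℝ (Fin d) :=
    fun ω => WithLp.toLp 2 (fun k => (μ[fun ω' => Y1 ω' * H ω' k | m2]) ω) with hZtdef
  have hZt_meas : Measurable[m2] Zt :=
    (WithLp.measurable_toLp 2 (Fin d → ℝ)).comp (@measurable_pi_lambda Ω (Fin d) (fun _ => ℝ) m2 _
      (fun ω k => (μ[fun ω' => Y1 ω' * H ω' k | m2]) ω) fun k => stronglyMeasurable_condExp.measurable)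
  have hZt_sm : StronglyMeasurable[m2] Zt := hZt_meas.stronglyMeasurable
  have hZt_eq : Z =ᵐ[μ] Zt := by
    have h : ∀ᵐ ω ∂μ, ∀ k, Z ω k = Zt ω k := ae_all_iff.mpr fun k => hZ k
    filter_upwards [h] with ω hω
    exact PiLp.ext fun k => hω k
  set Yt : Ω → ℝ := hY0m.mk Y0 with hYtdef
  have hYt_sm : StronglyMeasurable[m2] Yt := hY0m.stronglyMeasurable_mk
  have hYt_eq : Y0 =ᵐ[μ] Yt := hY0m.ae_eq_mk
  have hYt_meas : Measurable[m2] Yt := hYt_sm.measurable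
  -- the linearization coefficient β
  set β : Ω → EuclideanSpace ℝ (Fin d) := fun ω => gA f (Yt ω) (Zt ω) with hβdef
  have hfYZ_meas : Measurable[m2] fun ω => f (Yt ω) (Zt ω) :=
    hf_cont.measurable.comp (hYt_meas.prodMk hZt_meas)
  have hβ_meas : Measurable[m2] β :=
    (gA_measurable f hf_cont).comp (hYt_meas.prodMk hZt_meas)
  have hβ_bdd : ∀ ω, ‖β ω‖ ≤ LZ := fun ω => gA_norm_le f hLZ hfLz _ _
  have hβZ : ∀ ω, (inner ℝ (β ω) (Zt ω) : ℝ) = f (Yt ω) (Zt ω) - f (Yt ω) 0 := fun ω =>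
    gA_inner f _ _
  -- φ and its measurability
  set φ : Ω → ℝ := fun ω => f (Y0 ω) (Z ω) with hφdef
  have hhiφ_int : Integrable (fun ω => hi * φ ω) μ := hφ_int.const_mul hi
  have key1 : Y0 =ᵐ[μ] fun ω => (μ[Y1|m2]) ω + hi * φ ω := by
    have hsplit : (fun ω => Y1 ω + hi * f (Y0 ω) (Z ω)) = Y1 + fun ω => hi * φ ω := rfl
    have h1 : μ[fun ω => Y1 ω + hi * f (Y0 ω) (Z ω)|m2]
        =ᵐ[μ] μ[Y1|m2] + μ[fun ω => hi * φ ω|m2] := by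
      rw [hsplit]
      exact condExp_add (m := m2) (μ := μ) hY1_int hhiφ_int
    have h2 : μ[fun ω => hi * φ ω|m2] =ᵐ[μ] fun ω => hi * φ ω := by
      refine condExp_of_aestronglyMeasurable' (μ := μ) hm ?_ hhiφ_int
      refine ⟨fun ω => hi * f (Yt ω) (Zt ω), ((hfYZ_meas.const_mul hi).stronglyMeasurable), ?_⟩
      filter_upwards [hYt_eq, hZt_eq] with ω ha hb
      simp only [hφdef, ha, hb]
    have h3 : μ[Y1|m2] + μ[fun ω => hi * φ ω|m2] =ᵐ[μ] fun ω => (μ[Y1|m2]) ω + hi * φ ω := by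
      filter_upwards [h2] with ω h
      show (μ[Y1|m2]) ω + (μ[fun ω => hi * φ ω|m2]) ω = _
      rw [h]
    exact hY0.trans (h1.trans h3)
  -- the inner-product term ψ
  set ψ : Ω → ℝ := fun ω => (inner ℝ (β ω) (Z ω) : ℝ) with hψdef
  have hφ_split : φ =ᵐ[μ] fun ω => ψ ω + f (Y0 ω) 0 := by
    filter_upwards [hYt_eq, hZt_eq] with ω h1 h2
    simp only [hφdef, hψdef, h1, h2, hβZ ω]
    ring
  have hβ_meas0 : Measurable β := hβ_meas.mono hm le_rfl
  have hβ_asm : AEStronglyMeasurable β μ := hβ_meas0.aestronglyMeasurable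
  have hψ_asm : AEStronglyMeasurable ψ μ := hβ_asm.inner hZ_int.1
  have hψ_int : Integrable ψ μ := by
    refine Integrable.mono' (hZ_int.norm.const_mul LZ) hψ_asm ?_
    filter_upwards with ω
    calc ‖ψ ω‖ ≤ ‖β ω‖ * ‖Z ω‖ := by
          rw [Real.norm_eq_abs]; exact abs_real_inner_le_norm _ _
    _ ≤ LZ * ‖Z ω‖ := mul_le_mul_of_nonneg_right (hβ_bdd ω) (norm_nonneg _)
  -- coordinates
  have hβk_meas : ∀ k, Measurable[m2] fun ω => β ω k := fun k =>
    (measurable_pi_apply k).comp ((WithLp.measurable_ofLp 2 _).comp hβ_meas)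
  have hβk_bdd : ∀ ω k, |β ω k| ≤ LZ := fun ω k =>
    le_trans (euclid_abs_coord_le_norm _ k) (hβ_bdd ω)
  have hHk_asm : ∀ k, AEStronglyMeasurable (fun ω => H ω k) μ := fun k =>
    ((measurable_pi_apply k).comp_aemeasurable
      ((WithLp.measurable_ofLp 2 _).comp_aemeasurable hH_int.1.aemeasurable)).aestronglyMeasurable
  have hHk_int : ∀ k, Integrable (fun ω => H ω k) μ := fun k =>
    (EuclideanSpace.proj k : EuclideanSpace ℝ (Fin d) →L[ℝ] ℝ).integrable_comp hH_int
  have hYH_int : ∀ k, Integrable (fun ω => Y1 ω * H ω k) μ := by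
    intro k
    refine Integrable.mono' (hY1_int.norm.const_mul C) (hY1_int.1.mul (hHk_asm k)) ?_
    filter_upwards [hHC] with ω hω
    rw [Real.norm_eq_abs, abs_mul, Real.norm_eq_abs]
    have h1 : |H ω k| ≤ ‖H ω‖ := euclid_abs_coord_le_norm _ k
    nlinarith [abs_nonneg (Y1 ω), abs_nonneg (H ω k)]
  have hβsm : ∀ k, StronglyMeasurable[m2] fun ω => hi * β ω k := fun k =>
    ((hβk_meas k).const_mul hi).stronglyMeasurable
  have hβYH_int : ∀ k, Integrable (fun ω => (hi * β ω k) * (Y1 ω * H ω k)) μ := by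
    intro k
    refine Integrable.mono' ((hYH_int k).norm.const_mul (hi * LZ))
      ((((hβsm k).mono hm).aestronglyMeasurable).mul (hYH_int k).1) ?_
    filter_upwards with ω
    rw [Real.norm_eq_abs, abs_mul, abs_mul, abs_of_pos hhi, Real.norm_eq_abs]
    exact mul_le_mul_of_nonneg_right (mul_le_mul_of_nonneg_left (hβk_bdd ω k) hhi.le)
      (abs_nonneg _)
  have hβH_int : ∀ k, Integrable (fun ω => (hi * β ω k) * H ω k) μ := by
    intro k
    refine Integrable.mono' ((hHk_int k).norm.const_mul (hi * LZ))
      ((((hβsm k).mono hm).aestronglyMeasurable).mul (hHk_asm k)) ?_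
    filter_upwards with ω
    rw [Real.norm_eq_abs, abs_mul, abs_mul, abs_of_pos hhi, Real.norm_eq_abs]
    exact mul_le_mul_of_nonneg_right (mul_le_mul_of_nonneg_left (hβk_bdd ω k) hhi.le)
      (abs_nonneg _)
  -- pull-out properties
  have hpull : ∀ k, μ[fun ω => (hi * β ω k) * (Y1 ω * H ω k)|m2] =ᵐ[μ]
      fun ω => (hi * β ω k) * (μ[fun ω' => Y1 ω' * H ω' k|m2]) ω :=
    fun k => condExp_mul_of_stronglyMeasurable_left (hβsm k) (hβYH_int k) (hYH_int k)
  have hpullH : ∀ k, μ[fun ω => (hi * β ω k) * H ω k|m2] =ᵐ[μ] 0 := by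
    intro k
    have h := condExp_mul_of_stronglyMeasurable_left (hβsm k) (hβH_int k) (hHk_int k)
    refine h.trans ?_
    filter_upwards [hH_mean k] with ω hω
    show (hi * β ω k) * (μ[fun ω' => H ω' k|m2]) ω = 0
    rw [hω]
    simp
  -- the Girsanov-type weight G
  set G : Ω → ℝ := fun ω => 1 + hi * (inner ℝ (β ω) (H ω) : ℝ) with hGdef
  have hG_expand : ∀ ω, G ω = 1 + ∑ k, (hi * β ω k) * H ω k := by
    intro ω
    simp only [hGdef]
    rw [euclid_inner_sum, Finset.mul_sum]
    congr 1
    exact Finset.sum_congr rfl fun k _ => by ring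
  have hinner_bdd : ∀ᵐ ω ∂μ, |(inner ℝ (β ω) (H ω) : ℝ)| ≤ LZ * C := by
    filter_upwards [hHC] with ω hω
    calc |(inner ℝ (β ω) (H ω) : ℝ)| ≤ ‖β ω‖ * ‖H ω‖ := abs_real_inner_le_norm _ _
    _ ≤ LZ * C := by nlinarith [hβ_bdd ω, norm_nonneg (β ω), norm_nonneg (H ω)]
  have hG_nonneg : ∀ᵐ ω ∂μ, 0 ≤ G ω := by
    filter_upwards [hinner_bdd] with ω h1
    have h2 := (abs_le.mp h1).1
    simp only [hGdef]
    nlinarith [hhi.le, hcond1, mul_le_mul_of_nonneg_left h2 hhi.le]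
  have hG_bdd : ∀ᵐ ω ∂μ, |G ω| ≤ 2 := by
    filter_upwards [hinner_bdd] with ω h1
    have h2 := abs_le.mp h1
    simp only [hGdef]
    rw [abs_le]
    constructor <;>
      nlinarith [hhi.le, hcond1, mul_le_mul_of_nonneg_left h2.1 hhi.le,
        mul_le_mul_of_nonneg_left h2.2 hhi.le]
  have hG_asm : AEStronglyMeasurable G μ :=
    aestronglyMeasurable_const.add ((hβ_asm.inner hH_int.1) |>.const_mul hi)
  have hG_int : Integrable G μ := by
    refine Integrable.mono' (integrable_const 2) hG_asm ?_
    filter_upwards [hG_bdd] with ω h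
    rwa [Real.norm_eq_abs]
  have hY1G_int : Integrable (fun ω => Y1 ω * G ω) μ := by
    refine Integrable.mono' (hY1_int.norm.const_mul 2) (hY1_int.1.mul hG_asm) ?_
    filter_upwards [hG_bdd] with ω h
    rw [Real.norm_eq_abs, abs_mul, Real.norm_eq_abs]
    nlinarith [abs_nonneg (Y1 ω), abs_nonneg (G ω)]
  have hY1G_expand : (fun ω => Y1 ω * G ω)
      = Y1 + ∑ k : Fin d, fun ω => (hi * β ω k) * (Y1 ω * H ω k) := by
    funext ω
    simp only [Pi.add_apply, Finset.sum_apply]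
    rw [hG_expand ω, mul_add, mul_one, Finset.mul_sum]
    congr 1
    exact Finset.sum_congr rfl fun k _ => by ring
  have hsum_int : Integrable (∑ k : Fin d, fun ω => (hi * β ω k) * (Y1 ω * H ω k)) μ :=
    integrable_finset_sum' _ fun k _ => hβYH_int k
  have key2 : μ[fun ω => Y1 ω * G ω|m2] =ᵐ[μ] fun ω => (μ[Y1|m2]) ω + hi * ψ ω := by
    rw [hY1G_expand]
    have h1 := condExp_add (m := m2) (μ := μ) hY1_int hsum_int
    have h2 := condExp_finsetSum (m := m2) (μ := μ)
      (s := (Finset.univ : Finset (Fin d)))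
      (f := fun k ω => (hi * β ω k) * (Y1 ω * H ω k)) (fun k _ => hβYH_int k)
    have hall : ∀ᵐ ω ∂μ, ∀ k : Fin d,
        ((μ[fun ω' => (hi * β ω' k) * (Y1 ω' * H ω' k)|m2]) ω = (hi * β ω k) * Z ω k) := by
      refine ae_all_iff.mpr fun k => ?_
      filter_upwards [hpull k, hZ k] with ω ha hb
      rw [ha, ← hb]
    refine h1.trans ?_
    filter_upwards [h2, hall] with ω ha hb
    simp only [Pi.add_apply]
    rw [ha]
    simp only [Finset.sum_apply]
    rw [Finset.sum_congr rfl fun k _ => hb k]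
    congr 1
    have : hi * ψ ω = ∑ k, (hi * β ω k) * Z ω k := by
      simp only [hψdef]
      rw [euclid_inner_sum, Finset.mul_sum]
      exact Finset.sum_congr rfl fun k _ => by ring
    rw [this]
  -- Y0 = E[Y1 G | F] + hi f(Y0, 0) a.e.
  have key3 : Y0 =ᵐ[μ] fun ω => (μ[fun ω' => Y1 ω' * G ω'|m2]) ω + hi * f (Y0 ω) 0 := by
    filter_upwards [key1, hφ_split, key2] with ω h1 h2 h3
    calc Y0 ω = (μ[Y1|m2]) ω + hi * φ ω := h1
    _ = (μ[Y1|m2]) ω + hi * (ψ ω + f (Y0 ω) 0) := by rw [h2]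
    _ = ((μ[Y1|m2]) ω + hi * ψ ω) + hi * f (Y0 ω) 0 := by ring
    _ = (μ[fun ω' => Y1 ω' * G ω'|m2]) ω + hi * f (Y0 ω) 0 := by rw [← h3]
  -- conditional expectation of G is 1
  have hG_one : μ[G|m2] =ᵐ[μ] fun _ => (1:ℝ) := by
    have hGrw : G = (fun _ => (1:ℝ)) + ∑ k : Fin d, fun ω => (hi * β ω k) * H ω k := by
      funext ω
      simp only [Pi.add_apply, Finset.sum_apply]
      exact hG_expand ω
    have hsumH_int : Integrable (∑ k : Fin d, fun ω => (hi * β ω k) * H ω k) μ :=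
      integrable_finset_sum' _ fun k _ => hβH_int k
    rw [hGrw]
    have h1 := condExp_add (m := m2) (μ := μ) (integrable_const (1:ℝ)) hsumH_int
    have h2 := condExp_finsetSum (m := m2) (μ := μ)
      (s := (Finset.univ : Finset (Fin d)))
      (f := fun k ω => (hi * β ω k) * H ω k) (fun k _ => hβH_int k)
    have h3 : ∀ᵐ ω ∂μ, ∀ k : Fin d, (μ[fun ω' => (hi * β ω' k) * H ω' k|m2]) ω = 0 := by
      refine ae_all_iff.mpr fun k => ?_
      filter_upwards [hpullH k] with ω h
      exact h
    have h4 : μ[fun _ => (1:ℝ)|m2] = fun _ => (1:ℝ) := condExp_const hm 1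
    refine h1.trans ?_
    filter_upwards [h2, h3] with ω ha hb
    simp only [Pi.add_apply, h4]
    rw [ha]
    simp only [Finset.sum_apply]
    rw [Finset.sum_congr rfl fun k _ => hb k]
    simp
  -- bound the conditional expectation of Y1 * G
  have hMG : μ[fun ω => M * G ω|m2] =ᵐ[μ] fun ω => M * (μ[G|m2]) ω :=
    condExp_smul (μ := μ) (m := m2) M G
  have hmMG : μ[fun ω => (-M) * G ω|m2] =ᵐ[μ] fun ω => (-M) * (μ[G|m2]) ω :=
    condExp_smul (μ := μ) (m := m2) (-M) G
  have hub : μ[fun ω => Y1 ω * G ω|m2] ≤ᵐ[μ] μ[fun ω => M * G ω|m2] := by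
    refine condExp_mono hY1G_int (hG_int.const_mul M) ?_
    filter_upwards [hY1_bdd, hG_nonneg] with ω h1 h2
    nlinarith [(abs_le.mp h1).2]
  have hlb : μ[fun ω => (-M) * G ω|m2] ≤ᵐ[μ] μ[fun ω => Y1 ω * G ω|m2] := by
    refine condExp_mono (hG_int.const_mul (-M)) hY1G_int ?_
    filter_upwards [hY1_bdd, hG_nonneg] with ω h1 h2
    nlinarith [(abs_le.mp h1).1]
  have hbound : ∀ᵐ ω ∂μ, |(μ[fun ω' => Y1 ω' * G ω'|m2]) ω| ≤ M := by
    filter_upwards [hub, hlb, hMG, hmMG, hG_one] with ω h1 h2 h3 h4 h5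
    rw [abs_le]
    constructor
    · have := le_trans h4.symm.le h2
      rwa [h5, mul_one] at this
    · have := le_trans h1 h3.le
      rwa [h5, mul_one] at this
  -- conclusion
  filter_upwards [key3, hbound] with ω h1 h2
  have h3 : Y0 ω * f (Y0 ω) 0 ≤ 0 := by
    have h := hfmy (Y0 ω) 0 0
    rw [hf0] at h
    simp only [sub_zero] at h
    nlinarith [sq_abs (Y0 ω), mul_nonneg hlY (sq_nonneg |Y0 ω|)]
  have h4 : Y0 ω ^ 2 ≤ |Y0 ω| * M := by
    have e : Y0 ω ^ 2
        = Y0 ω * (μ[fun ω' => Y1 ω' * G ω'|m2]) ω + hi * (Y0 ω * f (Y0 ω) 0) := by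
      calc Y0 ω ^ 2 = Y0 ω * ((μ[fun ω' => Y1 ω' * G ω'|m2]) ω + hi * f (Y0 ω) 0) := by
            rw [← h1]; ring
      _ = _ := by ring
    rw [e]
    have h5 : Y0 ω * (μ[fun ω' => Y1 ω' * G ω'|m2]) ω ≤ |Y0 ω| * M := by
      calc Y0 ω * (μ[fun ω' => Y1 ω' * G ω'|m2]) ω ≤ |Y0 ω * (μ[fun ω' => Y1 ω' * G ω'|m2]) ω| :=
            le_abs_self _
      _ = |Y0 ω| * |(μ[fun ω' => Y1 ω' * G ω'|m2]) ω| := abs_mul _ _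
      _ ≤ |Y0 ω| * M := mul_le_mul_of_nonneg_left h2 (abs_nonneg _)
    nlinarith [h5, h3, hhi.le]
  rcases (abs_nonneg (Y0 ω)).eq_or_lt with h0 | h0
  · rw [← h0]; exact hM
  · exact (mul_le_mul_iff_of_pos_right h0).mp (by nlinarith [sq_abs (Y0 ω), h4])

lemma ae_norm_le_toReal_eLpNormTop {Ω E : Type*} [MeasurableSpace Ω] {μ : Measure Ω}
    [NormedAddCommGroup E] {f : Ω → E} (hf : MemLp f ⊤ μ) :
    ∀ᵐ ω ∂μ, ‖f ω‖ ≤ (eLpNorm f ⊤ μ).toReal := by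
  have h1 := enorm_ae_le_eLpNormEssSup f μ
  have hfin : eLpNormEssSup f μ ≠ ⊤ := by
    have h2 := hf.2
    rwa [eLpNorm_exponent_top, lt_top_iff_ne_top] at h2
  filter_upwards [h1] with ω hω
  have h3 := ENNReal.toReal_mono hfin hω
  rw [eLpNorm_exponent_top]
  simpa using h3

/-- Numerical stability of the implicit Euler scheme (θ = 1) for one-dimensional BSDEs
(`m = 1`): under monotonicity in `y` (constant `lY ≥ 0`), Lipschitz continuity in `z`
(constant `LZ`), essentially bounded `H`-coefficients and the condition
`h · L^Z · max_i ‖|H_i|‖_∞ ≤ 1`, the scheme started from an essentially bounded terminal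
condition `ξ` satisfies `|Y_i| ≤ ‖ξ‖_∞` a.s. for every `i`. -/
theorem implicit_euler_numerically_stable_dim_one
    {Ω : Type*} [MeasurableSpace Ω] (μ : Measure Ω) [IsProbabilityMeasure μ]
    (n d : ℕ) (hn : 1 ≤ n) (hd : 1 ≤ d)
    -- the time grid
    (t : Fin (n + 1) → ℝ) (ht0 : t 0 = 0) (ht : StrictMono t)
    -- the maximal step size h
    (hstep : ℝ) (hstep_def : hstep = ⨆ i : Fin n, (t i.succ - t i.castSucc))
    -- the discrete filtration
    (F : Fin (n + 1) → MeasurableSpace Ω)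
    (hF_mono : Monotone F) (hF_le : ∀ i, F i ≤ ‹MeasurableSpace Ω›)
    -- the H-coefficients
    (lam Lam : ℝ) (hlam : 0 < lam) (hLam : 0 < Lam)
    (c : Fin n → ℝ) (hc : ∀ i, lam / (d : ℝ) ≤ c i ∧ c i ≤ Lam / (d : ℝ))
    (H : Fin n → Ω → EuclideanSpace ℝ (Fin d))
    (hH_meas : ∀ i, Measurable[F i.succ] (H i))
    (hH_L2 : ∀ i, MemLp (H i) 2 μ)
    (hH_bdd : ∀ i, MemLp (H i) ⊤ μ)
    (hH_mean : ∀ i, μ[H i|F i.castSucc] =ᵐ[μ] 0)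
    (hH_cov : ∀ (i : Fin n) (k l : Fin d),
      (fun ω => (t i.succ - t i.castSucc) * (μ[fun ω' => H i ω' k * H i ω' l|F i.castSucc]) ω)
        =ᵐ[μ] fun _ => if k = l then c i else 0)
    -- the driver
    (f : ℝ → EuclideanSpace ℝ (Fin d) → ℝ)
    (hf_cont : Continuous fun p : ℝ × EuclideanSpace ℝ (Fin d) => f p.1 p.2)
    (hf0 : f 0 0 = 0)
    (lY LZ : ℝ) (hlY : 0 ≤ lY) (hLZ : 0 ≤ LZ)
    -- (fmy): monotonicity in y
    (hfmy : ∀ (y y' : ℝ) (z : EuclideanSpace ℝ (Fin d)),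
      (y - y') * (f y z - f y' z) ≤ -lY * |y - y'| ^ 2)
    -- (fLz): Lipschitz continuity in z
    (hfLz : ∀ (y : ℝ) (z z' : EuclideanSpace ℝ (Fin d)),
      |f y z - f y z'| ≤ LZ * ‖z - z'‖)
    -- the stability condition h · L^Z · max_i ‖|H_i|‖_∞ ≤ 1
    (hcond : hstep * LZ * (⨆ i : Fin n, (eLpNorm (H i) ⊤ μ).toReal) ≤ 1)
    -- the terminal condition
    (ξ : Ω → ℝ)
    (hξ_meas : Measurable[F (Fin.last n)] ξ) (hξ_bdd : MemLp ξ ⊤ μ)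
    -- the scheme
    (Y : Fin (n + 1) → Ω → ℝ)
    (Z : Fin n → Ω → EuclideanSpace ℝ (Fin d))
    (hY_L2 : ∀ i, MemLp (Y i) 2 μ) (hZ_L2 : ∀ i, MemLp (Z i) 2 μ)
    (hY_final : Y (Fin.last n) =ᵐ[μ] ξ)
    (hZ_def : ∀ (i : Fin n) (l : Fin d),
      (fun ω => Z i ω l) =ᵐ[μ] μ[fun ω => Y i.succ ω * H i ω l|F i.castSucc])
    (hY_def : ∀ i : Fin n, Y i.castSucc =ᵐ[μ]
      μ[fun ω => Y i.succ ω + (t i.succ - t i.castSucc) * f (Y i.castSucc ω) (Z i ω)|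
        F i.castSucc]) :
    ∀ i : Fin (n + 1), ∀ᵐ ω ∂μ, |Y i ω| ≤ (eLpNorm ξ ⊤ μ).toReal := by
  -- coordinatewise conditional mean-zero of H
  have hHk_mean : ∀ (i : Fin n) (k : Fin d),
      μ[fun ω => H i ω k|F i.castSucc] =ᵐ[μ] 0 := by
    intro i k
    have hm := hF_le i.castSucc
    have hHint : Integrable (H i) μ := (hH_L2 i).integrable one_le_two
    have h0 : (fun _ : Ω => (0:ℝ)) =ᵐ[μ] μ[fun ω => H i ω k|F i.castSucc] := by
      refine ae_eq_condExp_of_forall_setIntegral_eq hm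
        ((EuclideanSpace.proj k : EuclideanSpace ℝ (Fin d) →L[ℝ] ℝ).integrable_comp hHint)
        (fun s _ _ => (integrable_zero _ _ _).integrableOn) ?_
        stronglyMeasurable_const.aestronglyMeasurable
      intro s hs hμs
      have h1 : ∫ ω in s, H i ω ∂μ = 0 := by
        rw [← setIntegral_condExp hm hHint hs]
        have h2 : μ[H i|F i.castSucc] =ᵐ[μ.restrict s] 0 := ae_restrict_of_ae (hH_mean i)
        rw [integral_congr_ae h2]
        simp
      have h3 : ∫ ω in s, H i ω k ∂μ
          = (EuclideanSpace.proj k : EuclideanSpace ℝ (Fin d) →L[ℝ] ℝ) (∫ ω in s, H i ω ∂μ) := by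
        rw [← ContinuousLinearMap.integral_comp_comm _ hHint.integrableOn]
        rfl
      rw [integral_zero, h3, h1]
      simp
    exact h0.symm
  -- the essential bound on ξ
  have hM : (0:ℝ) ≤ (eLpNorm ξ ⊤ μ).toReal := ENNReal.toReal_nonneg
  have hξb : ∀ᵐ ω ∂μ, |ξ ω| ≤ (eLpNorm ξ ⊤ μ).toReal := by
    filter_upwards [ae_norm_le_toReal_eLpNormTop hξ_bdd] with ω h
    rwa [Real.norm_eq_abs] at h
  -- the smallness condition stepwise
  have hcond1 : ∀ i : Fin n,
      (t i.succ - t i.castSucc) * (LZ * (eLpNorm (H i) ⊤ μ).toReal) ≤ 1 := by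
    intro i
    have h1 : 0 < t i.succ - t i.castSucc := sub_pos.mpr (ht (Fin.castSucc_lt_succ : i.castSucc < i.succ))
    have hstep_le : t i.succ - t i.castSucc ≤ hstep := by
      rw [hstep_def]
      exact le_ciSup (f := fun j : Fin n => t j.succ - t j.castSucc)
        (Set.Finite.bddAbove (Set.finite_range _)) i
    have hC_le : (eLpNorm (H i) ⊤ μ).toReal
        ≤ ⨆ j : Fin n, (eLpNorm (H j) ⊤ μ).toReal :=
      le_ciSup (f := fun j : Fin n => (eLpNorm (H j) ⊤ μ).toReal)
        (Set.Finite.bddAbove (Set.finite_range _)) i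
    have hS : (0:ℝ) ≤ ⨆ j : Fin n, (eLpNorm (H j) ⊤ μ).toReal :=
      le_trans ENNReal.toReal_nonneg hC_le
    have hstep0 : (0:ℝ) ≤ hstep := le_trans h1.le hstep_le
    calc (t i.succ - t i.castSucc) * (LZ * (eLpNorm (H i) ⊤ μ).toReal)
        ≤ hstep * (LZ * ⨆ j : Fin n, (eLpNorm (H j) ⊤ μ).toReal) := by
          refine mul_le_mul hstep_le (mul_le_mul_of_nonneg_left hC_le hLZ) ?_ hstep0
          positivity
    _ = hstep * LZ * ⨆ j : Fin n, (eLpNorm (H j) ⊤ μ).toReal := by ring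
    _ ≤ 1 := hcond
  intro i
  induction i using Fin.reverseInduction with
  | last =>
    filter_upwards [hY_final, hξb] with ω h1 h2
    rw [h1]
    exact h2
  | cast i ih =>
    exact step_lemma (hF_le i.castSucc) μ f hf_cont hf0 hlY hLZ hfmy hfLz
      (sub_pos.mpr (ht (Fin.castSucc_lt_succ : i.castSucc < i.succ))) hM ENNReal.toReal_nonneg (hcond1 i)
      ((hY_L2 i.succ).integrable one_le_two) ih
      ((hH_L2 i).integrable one_le_two)
      (ae_norm_le_toReal_eLpNormTop (hH_bdd i))
      (hHk_mean i)
      ((hZ_L2 i).integrable one_le_two)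
      (hZ_def i) (hY_def i)
end

section
/- Let d ≥ 1, b ∈ ℝ^d with b ≠ 0, h > 0 and K ≥ 0, and set u := |b|_∞² h. Consider φ_K(x) := e^{−Σ_{ℓ=1}^d x_ℓ} · ( K + h (Σ_{ℓ=1}^d b_ℓ √x_ℓ)² ) for x ∈ [0,∞)^d. Then: (i) if u ≤ K, sup_{x ∈ [0,∞)^d} φ_K(x) = K; (ii) if u ≥ K (and hence in particular if u > K), sup_{x ∈ [0,∞)^d} φ_K(x) = u · e^{K/u − 1}. -/
/-- For `b ∈ ℝ^d`, `|b|_∞ := max(|b⁺|, |b⁻|)` where `b⁺ = (b₁ ∨ 0, …, b_d ∨ 0)`,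
`b⁻ = (b₁ ∧ 0, …, b_d ∧ 0)` and `|·|` is the Euclidean norm. -/
noncomputable def bInfty {d : ℕ} (b : Fin d → ℝ) : ℝ :=
  max (Real.sqrt (∑ ℓ, max (b ℓ) 0 ^ 2)) (Real.sqrt (∑ ℓ, min (b ℓ) 0 ^ 2))

lemma bInfty_nonneg {d : ℕ} (b : Fin d → ℝ) : 0 ≤ bInfty b :=
  le_trans (Real.sqrt_nonneg _) (le_max_left _ _)

lemma sum_max_sq_le {d : ℕ} (b : Fin d → ℝ) :
    ∑ ℓ, max (b ℓ) 0 ^ 2 ≤ bInfty b ^ 2 := by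
  have h0 : (0:ℝ) ≤ ∑ ℓ, max (b ℓ) 0 ^ 2 := Finset.sum_nonneg fun ℓ _ => sq_nonneg _
  calc ∑ ℓ, max (b ℓ) 0 ^ 2 = Real.sqrt (∑ ℓ, max (b ℓ) 0 ^ 2) ^ 2 := (Real.sq_sqrt h0).symm
    _ ≤ bInfty b ^ 2 := pow_le_pow_left₀ (Real.sqrt_nonneg _) (le_max_left _ _) 2

lemma sum_min_sq_le {d : ℕ} (b : Fin d → ℝ) :
    ∑ ℓ, min (b ℓ) 0 ^ 2 ≤ bInfty b ^ 2 := by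
  have h0 : (0:ℝ) ≤ ∑ ℓ, min (b ℓ) 0 ^ 2 := Finset.sum_nonneg fun ℓ _ => sq_nonneg _
  calc ∑ ℓ, min (b ℓ) 0 ^ 2 = Real.sqrt (∑ ℓ, min (b ℓ) 0 ^ 2) ^ 2 := (Real.sq_sqrt h0).symm
    _ ≤ bInfty b ^ 2 := pow_le_pow_left₀ (Real.sqrt_nonneg _) (le_max_right _ _) 2

lemma bInfty_pos {d : ℕ} (b : Fin d → ℝ) (hb : b ≠ 0) : 0 < bInfty b := by
  obtain ⟨ℓ, hℓ⟩ := Function.ne_iff.mp hb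
  simp only [Pi.zero_apply] at hℓ
  rcases lt_or_gt_of_ne hℓ with hneg | hpos
  · have h1 : (b ℓ) ^ 2 ≤ ∑ j, min (b j) 0 ^ 2 := by
      have := Finset.single_le_sum (f := fun j => min (b j) 0 ^ 2)
        (fun j _ => sq_nonneg _) (Finset.mem_univ ℓ)
      simpa [min_eq_left hneg.le] using this
    have h2 : 0 < Real.sqrt (∑ j, min (b j) 0 ^ 2) :=
      Real.sqrt_pos.mpr (lt_of_lt_of_le (by nlinarith : (0:ℝ) < b ℓ ^ 2) h1)
    exact lt_of_lt_of_le h2 (le_max_right _ _)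
  · have h1 : (b ℓ) ^ 2 ≤ ∑ j, max (b j) 0 ^ 2 := by
      have := Finset.single_le_sum (f := fun j => max (b j) 0 ^ 2)
        (fun j _ => sq_nonneg _) (Finset.mem_univ ℓ)
      simpa [max_eq_left hpos.le] using this
    have h2 : 0 < Real.sqrt (∑ j, max (b j) 0 ^ 2) :=
      Real.sqrt_pos.mpr (lt_of_lt_of_le (pow_pos hpos 2) h1)
    exact lt_of_lt_of_le h2 (le_max_left _ _)

/-- Cauchy–Schwarz-type bound: `(∑ bℓ √xℓ)² ≤ |b|_∞² ∑ xℓ`. -/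
lemma sq_sum_sqrt_le {d : ℕ} (b x : Fin d → ℝ) (hx : ∀ ℓ, 0 ≤ x ℓ) :
    (∑ ℓ, b ℓ * Real.sqrt (x ℓ)) ^ 2 ≤ bInfty b ^ 2 * ∑ ℓ, x ℓ := by
  have hS : (0:ℝ) ≤ ∑ ℓ, x ℓ := Finset.sum_nonneg fun ℓ _ => hx ℓ
  have hsq : ∀ ℓ : Fin d, Real.sqrt (x ℓ) ^ 2 = x ℓ := fun ℓ => Real.sq_sqrt (hx ℓ)
  have csP : (∑ ℓ, max (b ℓ) 0 * Real.sqrt (x ℓ)) ^ 2 ≤ (∑ ℓ, max (b ℓ) 0 ^ 2) * ∑ ℓ, x ℓ := by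
    have := Finset.sum_mul_sq_le_sq_mul_sq Finset.univ
      (fun ℓ => max (b ℓ) 0) (fun ℓ => Real.sqrt (x ℓ))
    simpa [hsq] using this
  have csN : (∑ ℓ, min (b ℓ) 0 * Real.sqrt (x ℓ)) ^ 2 ≤ (∑ ℓ, min (b ℓ) 0 ^ 2) * ∑ ℓ, x ℓ := by
    have := Finset.sum_mul_sq_le_sq_mul_sq Finset.univ
      (fun ℓ => min (b ℓ) 0) (fun ℓ => Real.sqrt (x ℓ))
    simpa [hsq] using this
  have hle : ∑ ℓ, b ℓ * Real.sqrt (x ℓ) ≤ ∑ ℓ, max (b ℓ) 0 * Real.sqrt (x ℓ) :=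
    Finset.sum_le_sum fun ℓ _ =>
      mul_le_mul_of_nonneg_right (le_max_left _ _) (Real.sqrt_nonneg _)
  have hge : ∑ ℓ, min (b ℓ) 0 * Real.sqrt (x ℓ) ≤ ∑ ℓ, b ℓ * Real.sqrt (x ℓ) :=
    Finset.sum_le_sum fun ℓ _ =>
      mul_le_mul_of_nonneg_right (min_le_left _ _) (Real.sqrt_nonneg _)
  rcases le_or_gt 0 (∑ ℓ, b ℓ * Real.sqrt (x ℓ)) with h0 | h0
  · calc (∑ ℓ, b ℓ * Real.sqrt (x ℓ)) ^ 2
        ≤ (∑ ℓ, max (b ℓ) 0 * Real.sqrt (x ℓ)) ^ 2 := pow_le_pow_left₀ h0 hle 2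
      _ ≤ (∑ ℓ, max (b ℓ) 0 ^ 2) * ∑ ℓ, x ℓ := csP
      _ ≤ bInfty b ^ 2 * ∑ ℓ, x ℓ := mul_le_mul_of_nonneg_right (sum_max_sq_le b) hS
  · have h2 : (∑ ℓ, b ℓ * Real.sqrt (x ℓ)) ^ 2 ≤ (∑ ℓ, min (b ℓ) 0 * Real.sqrt (x ℓ)) ^ 2 := by
      nlinarith [hge, h0]
    calc (∑ ℓ, b ℓ * Real.sqrt (x ℓ)) ^ 2
        ≤ (∑ ℓ, min (b ℓ) 0 * Real.sqrt (x ℓ)) ^ 2 := h2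
      _ ≤ (∑ ℓ, min (b ℓ) 0 ^ 2) * ∑ ℓ, x ℓ := csN
      _ ≤ bInfty b ^ 2 * ∑ ℓ, x ℓ := mul_le_mul_of_nonneg_right (sum_min_sq_le b) hS

/-- An explicit maximizing direction: a nonnegative vector `c` with `∑ c² = |b|_∞²`
and `(∑ b c)² = (|b|_∞²)²`. -/
lemma exists_maximizing_dir {d : ℕ} (b : Fin d → ℝ) :
    ∃ c : Fin d → ℝ, (∀ ℓ, 0 ≤ c ℓ) ∧ (∑ ℓ, c ℓ ^ 2) = bInfty b ^ 2 ∧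
      (∑ ℓ, b ℓ * c ℓ) ^ 2 = (bInfty b ^ 2) ^ 2 := by
  have hP : (0:ℝ) ≤ ∑ ℓ, max (b ℓ) 0 ^ 2 := Finset.sum_nonneg fun ℓ _ => sq_nonneg _
  have hN : (0:ℝ) ≤ ∑ ℓ, min (b ℓ) 0 ^ 2 := Finset.sum_nonneg fun ℓ _ => sq_nonneg _
  rcases max_choice (Real.sqrt (∑ ℓ, max (b ℓ) 0 ^ 2))
      (Real.sqrt (∑ ℓ, min (b ℓ) 0 ^ 2)) with hc | hc
  · refine ⟨fun ℓ => max (b ℓ) 0, fun ℓ => le_max_right _ _, ?_, ?_⟩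
    · rw [bInfty, hc, Real.sq_sqrt hP]
    · have hterm : ∑ ℓ, b ℓ * max (b ℓ) 0 = ∑ ℓ, max (b ℓ) 0 ^ 2 :=
        Finset.sum_congr rfl fun ℓ _ => by
          rcases le_total 0 (b ℓ) with h | h
          · rw [max_eq_left h]; ring
          · rw [max_eq_right h]; ring
      rw [hterm, bInfty, hc, Real.sq_sqrt hP]
  · refine ⟨fun ℓ => -(min (b ℓ) 0), fun ℓ => neg_nonneg.mpr (min_le_right _ _), ?_, ?_⟩
    · simp only [neg_sq]
      rw [bInfty, hc, Real.sq_sqrt hN]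
    · have hterm : ∑ ℓ, b ℓ * -(min (b ℓ) 0) = -∑ ℓ, min (b ℓ) 0 ^ 2 := by
        rw [← Finset.sum_neg_distrib]
        exact Finset.sum_congr rfl fun ℓ _ => by
          rcases le_total (b ℓ) 0 with h | h
          · rw [min_eq_left h]; ring
          · rw [min_eq_right h]; ring
      rw [hterm, bInfty, hc, neg_sq, Real.sq_sqrt hN]

/-- The key optimization of the Von Neumann stability analysis: with
`φ_K(x) = e^{-Σ x_ℓ} (K + h (Σ b_ℓ √x_ℓ)²)` on the nonnegative orthant and
`u := |b|_∞² h`, the supremum of `φ_K` equals `K` when `u ≤ K` and equals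
`u e^{K/u - 1}` when `u ≥ K`. -/
theorem sup_phi_von_neumann (d : ℕ) (hd : 1 ≤ d) (b : Fin d → ℝ) (hb : b ≠ 0)
    (h : ℝ) (hh : 0 < h) (K : ℝ) (hK : 0 ≤ K) :
    (bInfty b ^ 2 * h ≤ K →
      sSup ((fun x : Fin d → ℝ =>
          Real.exp (-∑ ℓ, x ℓ) * (K + h * (∑ ℓ, b ℓ * Real.sqrt (x ℓ)) ^ 2)) ''
        {x | ∀ ℓ, 0 ≤ x ℓ}) = K) ∧
    (K ≤ bInfty b ^ 2 * h →
      sSup ((fun x : Fin d → ℝ =>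
          Real.exp (-∑ ℓ, x ℓ) * (K + h * (∑ ℓ, b ℓ * Real.sqrt (x ℓ)) ^ 2)) ''
        {x | ∀ ℓ, 0 ≤ x ℓ}) =
      bInfty b ^ 2 * h * Real.exp (K / (bInfty b ^ 2 * h) - 1)) := by
  have hA0 : 0 < bInfty b := bInfty_pos b hb
  set A := bInfty b with hA
  set u := A ^ 2 * h with hu
  have hupos : 0 < u := by positivity
  -- pointwise bound through the one-dimensional function
  have key : ∀ x : Fin d → ℝ, (∀ ℓ, 0 ≤ x ℓ) →
      Real.exp (-∑ ℓ, x ℓ) * (K + h * (∑ ℓ, b ℓ * Real.sqrt (x ℓ)) ^ 2) ≤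
        Real.exp (-∑ ℓ, x ℓ) * (K + u * ∑ ℓ, x ℓ) := by
    intro x hx
    have h1 := sq_sum_sqrt_le b x hx
    have : h * (∑ ℓ, b ℓ * Real.sqrt (x ℓ)) ^ 2 ≤ u * ∑ ℓ, x ℓ := by
      rw [hu]
      calc h * (∑ ℓ, b ℓ * Real.sqrt (x ℓ)) ^ 2 ≤ h * (A ^ 2 * ∑ ℓ, x ℓ) :=
            mul_le_mul_of_nonneg_left h1 hh.le
        _ = A ^ 2 * h * ∑ ℓ, x ℓ := by ring
    have he : (0:ℝ) < Real.exp (-∑ ℓ, x ℓ) := Real.exp_pos _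
    nlinarith [this, he]
  constructor
  · -- case u ≤ K
    intro hle
    apply IsGreatest.csSup_eq
    constructor
    · refine ⟨0, fun ℓ => le_refl 0, ?_⟩
      simp
    · rintro y ⟨x, hx, rfl⟩
      have hS : (0:ℝ) ≤ ∑ ℓ, x ℓ := Finset.sum_nonneg fun ℓ _ => hx ℓ
      refine le_trans (key x hx) ?_
      rw [Real.exp_neg, inv_mul_le_iff₀ (Real.exp_pos _)]
      have hexp := Real.add_one_le_exp (∑ ℓ, x ℓ)
      nlinarith [mul_le_mul_of_nonneg_left hexp hK,
        mul_le_mul_of_nonneg_right hle hS]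
  · -- case K ≤ u
    intro hge
    apply IsGreatest.csSup_eq
    set s : ℝ := 1 - K / u with hs
    have hs0 : 0 ≤ s := by
      rw [hs, sub_nonneg]
      exact (div_le_one hupos).mpr hge
    have hKu : u * (K / u) = K := by field_simp
    constructor
    · -- attainment
      obtain ⟨c, hc0, hc2, hbc⟩ := exists_maximizing_dir b
      refine ⟨fun ℓ => (Real.sqrt s * c ℓ / A) ^ 2, fun ℓ => sq_nonneg _, ?_⟩
      have hAne : A ≠ 0 := ne_of_gt hA0
      have hsum : ∑ ℓ, (Real.sqrt s * c ℓ / A) ^ 2 = s := by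
        have hterm : ∀ ℓ : Fin d, (Real.sqrt s * c ℓ / A) ^ 2 = s / A ^ 2 * c ℓ ^ 2 := by
          intro ℓ
          rw [div_pow, mul_pow, Real.sq_sqrt hs0]
          ring
        rw [Finset.sum_congr rfl fun ℓ _ => hterm ℓ, ← Finset.mul_sum, hc2,
          div_mul_cancel₀ _ (pow_ne_zero 2 hAne)]
      have hsqrt : ∀ ℓ : Fin d, Real.sqrt ((Real.sqrt s * c ℓ / A) ^ 2) =
          Real.sqrt s * c ℓ / A := by
        intro ℓ
        exact Real.sqrt_sq (div_nonneg (mul_nonneg (Real.sqrt_nonneg _) (hc0 ℓ)) hA0.le)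
      have hdot : (∑ ℓ, b ℓ * Real.sqrt ((Real.sqrt s * c ℓ / A) ^ 2)) ^ 2 = A ^ 2 * s := by
        have : ∑ ℓ, b ℓ * Real.sqrt ((Real.sqrt s * c ℓ / A) ^ 2) =
            Real.sqrt s / A * ∑ ℓ, b ℓ * c ℓ := by
          rw [Finset.mul_sum]
          exact Finset.sum_congr rfl fun ℓ _ => by rw [hsqrt ℓ]; ring
        rw [this, mul_pow, div_pow, Real.sq_sqrt hs0, hbc]
        field_simp
        ring
      show Real.exp (-∑ ℓ, (Real.sqrt s * c ℓ / A) ^ 2) *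
          (K + h * (∑ ℓ, b ℓ * Real.sqrt ((Real.sqrt s * c ℓ / A) ^ 2)) ^ 2) =
        u * Real.exp (K / u - 1)
      rw [hsum, hdot]
      rw [show h * (A ^ 2 * s) = u * s by rw [hu]; ring]
      have hKus : K + u * s = u := by
        rw [hs]; field_simp; ring
      rw [hKus, hs]
      rw [show -(1 - K / u) = K / u - 1 by ring]
      ring
    · -- upper bound
      rintro y ⟨x, hx, rfl⟩
      have hS : (0:ℝ) ≤ ∑ ℓ, x ℓ := Finset.sum_nonneg fun ℓ _ => hx ℓ
      refine le_trans (key x hx) ?_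
      rw [Real.exp_neg, inv_mul_le_iff₀ (Real.exp_pos _)]
      rw [show Real.exp (∑ ℓ, x ℓ) * (u * Real.exp (K / u - 1)) =
          u * Real.exp (K / u - 1 + ∑ ℓ, x ℓ) by rw [Real.exp_add]; ring]
      have hexp := Real.add_one_le_exp (K / u - 1 + ∑ ℓ, x ℓ)
      nlinarith [mul_le_mul_of_nonneg_left hexp hupos.le, hKu]
end

section
/- Let d ≥ 1, a ≤ 0, b ∈ ℝ^d with b ≠ 0, h > 0, and set u := |b|_∞² h. Then the following are equivalent: (1) for every x ∈ [0,∞)^d, e^{−Σ_{ℓ=1}^d x_ℓ} · ( 1 + h (Σ_{ℓ=1}^d b_ℓ √x_ℓ)² ) ≤ (1 − a h)²; (2) either u ≤ 1, or u > 1 and (1 − a h)² − u · e^{1/u − 1} ≥ 0. This is the Von Neumann stability criterion of the implicit Euler scheme for the linear driver f(y,z) = a y + Σ_{ℓ=1}^d b_ℓ z^ℓ. -/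
lemma vnc_key_scalar (u s : ℝ) (hu : 0 < u) :
    Real.exp (-s) * (1 + u * s) ≤ u * Real.exp (1 / u - 1) := by
  have h1 : s + 1 / u - 1 + 1 ≤ Real.exp (s + 1 / u - 1) := Real.add_one_le_exp _
  have h2 : 1 + u * s ≤ u * Real.exp (s + 1 / u - 1) := by
    have := mul_le_mul_of_nonneg_left h1 hu.le
    calc 1 + u * s = u * (s + 1 / u - 1 + 1) := by field_simp; ring
    _ ≤ u * Real.exp (s + 1 / u - 1) := this
  calc Real.exp (-s) * (1 + u * s) ≤ Real.exp (-s) * (u * Real.exp (s + 1 / u - 1)) :=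
        mul_le_mul_of_nonneg_left h2 (Real.exp_nonneg _)
  _ = u * Real.exp (1 / u - 1) := by
        rw [mul_left_comm, ← Real.exp_add]
        ring_nf

/-- Construction of the extremal point. -/
lemma vnc_exists_x {d : ℕ} (b : Fin d → ℝ) (c : Fin d → ℝ) (hc0 : ∀ ℓ, 0 ≤ c ℓ)
    (ε : ℝ) (hε : ε ^ 2 = 1) (hc : ∀ ℓ, b ℓ * c ℓ = ε * c ℓ ^ 2)
    (s M : ℝ) (hs : 0 ≤ s) (hM : 0 < M) (hsum : ∑ ℓ, c ℓ ^ 2 = M ^ 2) :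
    ∃ x : Fin d → ℝ, (∀ ℓ, 0 ≤ x ℓ) ∧ (∑ ℓ, x ℓ) = s ∧
      (∑ ℓ, b ℓ * Real.sqrt (x ℓ)) ^ 2 = M ^ 2 * s := by
  refine ⟨fun ℓ => (Real.sqrt s * c ℓ / M) ^ 2, fun ℓ => sq_nonneg _, ?_, ?_⟩
  · have : ∀ ℓ, (Real.sqrt s * c ℓ / M) ^ 2 = s / M ^ 2 * c ℓ ^ 2 := by
      intro ℓ; rw [div_pow, mul_pow, Real.sq_sqrt hs]; ring
    simp_rw [this]
    rw [← Finset.mul_sum, hsum]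
    field_simp
  · have hsq : ∀ ℓ, Real.sqrt ((Real.sqrt s * c ℓ / M) ^ 2) = Real.sqrt s * c ℓ / M := by
      intro ℓ
      exact Real.sqrt_sq (div_nonneg (mul_nonneg (Real.sqrt_nonneg _) (hc0 ℓ)) hM.le)
    simp_rw [hsq]
    have : ∀ ℓ, b ℓ * (Real.sqrt s * c ℓ / M) = (Real.sqrt s / M) * (ε * c ℓ ^ 2) := by
      intro ℓ; rw [← hc ℓ]; ring
    simp_rw [this]
    rw [← Finset.mul_sum, ← Finset.mul_sum, hsum]
    have hss : Real.sqrt s ^ 2 = s := Real.sq_sqrt hs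
    have hexp : (Real.sqrt s / M * (ε * M ^ 2)) ^ 2
        = Real.sqrt s ^ 2 * ε ^ 2 * (M ^ 2) ^ 2 / M ^ 2 := by ring
    rw [hexp, hss, hε]
    field_simp

/-- Cauchy-Schwarz type bound. -/
lemma vnc_cs {d : ℕ} (b : Fin d → ℝ) (x : Fin d → ℝ) (hx : ∀ ℓ, 0 ≤ x ℓ) :
    (∑ ℓ, b ℓ * Real.sqrt (x ℓ)) ^ 2 ≤ bInfty b ^ 2 * ∑ ℓ, x ℓ := by
  set A := ∑ ℓ, max (b ℓ) 0 ^ 2 with hA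
  set B := ∑ ℓ, min (b ℓ) 0 ^ 2 with hB
  set s := ∑ ℓ, x ℓ with hsdef
  have hs : 0 ≤ s := Finset.sum_nonneg fun ℓ _ => hx ℓ
  have hA0 : 0 ≤ A := Finset.sum_nonneg fun ℓ _ => sq_nonneg _
  have hB0 : 0 ≤ B := Finset.sum_nonneg fun ℓ _ => sq_nonneg _
  have hxs : ∑ ℓ, Real.sqrt (x ℓ) ^ 2 = s := by
    rw [hsdef]; exact Finset.sum_congr rfl fun ℓ _ => Real.sq_sqrt (hx ℓ)
  set M := bInfty b with hMdef
  have hM0 : 0 ≤ M := le_trans (Real.sqrt_nonneg _) (le_max_left _ _)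
  have hAM : Real.sqrt A ≤ M := le_max_left _ _
  have hBM : Real.sqrt B ≤ M := le_max_right _ _
  set T := ∑ ℓ, b ℓ * Real.sqrt (x ℓ) with hT
  have hup : T ≤ M * Real.sqrt s := by
    have h1 : T ≤ ∑ ℓ, max (b ℓ) 0 * Real.sqrt (x ℓ) := by
      apply Finset.sum_le_sum
      intro ℓ _
      exact mul_le_mul_of_nonneg_right (le_max_left _ _) (Real.sqrt_nonneg _)
    have h2 : (∑ ℓ, max (b ℓ) 0 * Real.sqrt (x ℓ)) ^ 2 ≤ A * s := by
      rw [← hxs]; exact Finset.sum_mul_sq_le_sq_mul_sq _ _ _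
    have h3 : (∑ ℓ, max (b ℓ) 0 * Real.sqrt (x ℓ)) ≤ Real.sqrt A * Real.sqrt s := by
      have hnn : 0 ≤ ∑ ℓ, max (b ℓ) 0 * Real.sqrt (x ℓ) :=
        Finset.sum_nonneg fun ℓ _ => mul_nonneg (le_max_right _ _) (Real.sqrt_nonneg _)
      have := (Real.le_sqrt hnn (mul_nonneg hA0 hs)).mpr h2
      rwa [Real.sqrt_mul hA0] at this
    calc T ≤ Real.sqrt A * Real.sqrt s := le_trans h1 h3
    _ ≤ M * Real.sqrt s := mul_le_mul_of_nonneg_right hAM (Real.sqrt_nonneg _)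
  have hlow : -(M * Real.sqrt s) ≤ T := by
    have h1 : -T ≤ ∑ ℓ, (-(min (b ℓ) 0)) * Real.sqrt (x ℓ) := by
      rw [hT, ← Finset.sum_neg_distrib]
      apply Finset.sum_le_sum
      intro ℓ _
      have : -(b ℓ) ≤ -(min (b ℓ) 0) := by simp [min_le_left]
      have h4 : -(b ℓ * Real.sqrt (x ℓ)) = (-(b ℓ)) * Real.sqrt (x ℓ) := by ring
      rw [h4]
      exact mul_le_mul_of_nonneg_right this (Real.sqrt_nonneg _)
    have h2 : (∑ ℓ, (-(min (b ℓ) 0)) * Real.sqrt (x ℓ)) ^ 2 ≤ B * s := by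
      have : B = ∑ ℓ, (-(min (b ℓ) 0)) ^ 2 := by
        rw [hB]; exact Finset.sum_congr rfl fun ℓ _ => by ring
      rw [this, ← hxs]
      exact Finset.sum_mul_sq_le_sq_mul_sq _ _ _
    have h3 : (∑ ℓ, (-(min (b ℓ) 0)) * Real.sqrt (x ℓ)) ≤ Real.sqrt B * Real.sqrt s := by
      have hnn : 0 ≤ ∑ ℓ, (-(min (b ℓ) 0)) * Real.sqrt (x ℓ) :=
        Finset.sum_nonneg fun ℓ _ =>
          mul_nonneg (by simp [min_le_right]) (Real.sqrt_nonneg _)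
      have := (Real.le_sqrt hnn (mul_nonneg hB0 hs)).mpr h2
      rwa [Real.sqrt_mul hB0] at this
    have : -T ≤ M * Real.sqrt s :=
      le_trans h1 (le_trans h3 (mul_le_mul_of_nonneg_right hBM (Real.sqrt_nonneg _)))
    linarith
  have := sq_le_sq' hlow hup
  calc T ^ 2 ≤ (M * Real.sqrt s) ^ 2 := this
  _ = M ^ 2 * s := by rw [mul_pow, Real.sq_sqrt hs]

/-- Von Neumann stability criterion of the implicit Euler scheme for the linear driver
`f(y,z) = a y + Σ b_ℓ z^ℓ`: with `u := |b|_∞² h`, the inequality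
`e^{-Σ x_ℓ} (1 + h (Σ b_ℓ √x_ℓ)²) ≤ (1 - a h)²` holds on the whole nonnegative orthant
if and only if `u ≤ 1`, or `u > 1` and `(1 - a h)² - u e^{1/u - 1} ≥ 0`. -/
theorem von_neumann_criterion_implicit (d : ℕ) (hd : 1 ≤ d) (a : ℝ) (ha : a ≤ 0)
    (b : Fin d → ℝ) (hb : b ≠ 0) (h : ℝ) (hh : 0 < h) :
    (∀ x : Fin d → ℝ, (∀ ℓ, 0 ≤ x ℓ) →
        Real.exp (-∑ ℓ, x ℓ) * (1 + h * (∑ ℓ, b ℓ * Real.sqrt (x ℓ)) ^ 2) ≤ (1 - a * h) ^ 2)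
      ↔ (bInfty b ^ 2 * h ≤ 1 ∨
          (1 < bInfty b ^ 2 * h ∧
            0 ≤ (1 - a * h) ^ 2 -
              bInfty b ^ 2 * h * Real.exp (1 / (bInfty b ^ 2 * h) - 1))) := by
  set A := ∑ ℓ, max (b ℓ) 0 ^ 2 with hA
  set B := ∑ ℓ, min (b ℓ) 0 ^ 2 with hB
  have hA0 : 0 ≤ A := Finset.sum_nonneg fun ℓ _ => sq_nonneg _
  have hB0 : 0 ≤ B := Finset.sum_nonneg fun ℓ _ => sq_nonneg _
  have hMsq : bInfty b ^ 2 = max A B := by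
    unfold bInfty
    rcases le_total A B with hab | hab
    · rw [max_eq_right (Real.sqrt_le_sqrt hab), max_eq_right hab, Real.sq_sqrt hB0]
    · rw [max_eq_left (Real.sqrt_le_sqrt hab), max_eq_left hab, Real.sq_sqrt hA0]
  have hM0 : 0 ≤ bInfty b := le_trans (Real.sqrt_nonneg _) (le_max_left _ _)
  have hMpos : 0 < bInfty b := by
    rcases Function.ne_iff.mp hb with ⟨ℓ, hℓ⟩
    rw [Pi.zero_apply] at hℓ
    have hAB : 0 < max A B := by
      rcases lt_or_gt_of_ne hℓ with hneg | hpos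
      · have h1 : min (b ℓ) 0 ^ 2 ≤ B :=
          Finset.single_le_sum (fun i _ => sq_nonneg (min (b i) 0)) (Finset.mem_univ ℓ)
        have h2 : 0 < min (b ℓ) 0 ^ 2 := by
          have : min (b ℓ) 0 = b ℓ := min_eq_left hneg.le
          rw [this]; nlinarith
        exact lt_max_of_lt_right (lt_of_lt_of_le h2 h1)
      · have h1 : max (b ℓ) 0 ^ 2 ≤ A :=
          Finset.single_le_sum (fun i _ => sq_nonneg (max (b i) 0)) (Finset.mem_univ ℓ)
        have h2 : 0 < max (b ℓ) 0 ^ 2 := by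
          have : max (b ℓ) 0 = b ℓ := max_eq_left hpos.le
          rw [this]; nlinarith
        exact lt_max_of_lt_left (lt_of_lt_of_le h2 h1)
    nlinarith [hMsq]
  set u := bInfty b ^ 2 * h with hu
  have hupos : 0 < u := by positivity
  have hone : 1 ≤ (1 - a * h) ^ 2 := by nlinarith [mul_nonneg (neg_nonneg.mpr ha) hh.le]
  constructor
  · intro H
    by_cases hu1 : u ≤ 1
    · exact Or.inl hu1
    push_neg at hu1
    refine Or.inr ⟨hu1, ?_⟩
    set s := 1 - 1 / u with hsdef
    have hs : 0 ≤ s := by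
      have h1 : 1 / u < 1 := by rw [div_lt_one hupos]; exact hu1
      rw [hsdef]; linarith
    -- construct the extremal x
    have hex : ∃ x : Fin d → ℝ, (∀ ℓ, 0 ≤ x ℓ) ∧ (∑ ℓ, x ℓ) = s ∧
        (∑ ℓ, b ℓ * Real.sqrt (x ℓ)) ^ 2 = bInfty b ^ 2 * s := by
      rcases le_total B A with hab | hab
      · refine vnc_exists_x b (fun ℓ => max (b ℓ) 0) (fun ℓ => le_max_right _ _) 1
          (by norm_num) ?_ s (bInfty b) hs hMpos ?_
        · intro ℓ
          show b ℓ * max (b ℓ) 0 = 1 * max (b ℓ) 0 ^ 2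
          rcases le_total (b ℓ) 0 with h' | h'
          · rw [max_eq_right h']; ring
          · rw [max_eq_left h']; ring
        · show (∑ ℓ, max (b ℓ) 0 ^ 2) = bInfty b ^ 2
          rw [hMsq, ← hA, max_eq_left hab]
      · refine vnc_exists_x b (fun ℓ => -(min (b ℓ) 0)) (fun ℓ => by simp [min_le_right]) (-1)
          (by norm_num) ?_ s (bInfty b) hs hMpos ?_
        · intro ℓ
          show b ℓ * -(min (b ℓ) 0) = -1 * (-(min (b ℓ) 0)) ^ 2
          rcases le_total (b ℓ) 0 with h' | h'
          · rw [min_eq_left h']; ring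
          · rw [min_eq_right h']; ring
        · show (∑ ℓ, (-(min (b ℓ) 0)) ^ 2) = bInfty b ^ 2
          have heq : ∀ ℓ : Fin d, (-(min (b ℓ) 0)) ^ 2 = min (b ℓ) 0 ^ 2 := fun ℓ => by ring
          rw [Finset.sum_congr rfl fun ℓ _ => heq ℓ, hMsq, ← hB, max_eq_right hab]
    rcases hex with ⟨x, hx0, hxs, hxv⟩
    have := H x hx0
    rw [hxs, hxv] at this
    have key : Real.exp (-s) * (1 + h * (bInfty b ^ 2 * s)) = u * Real.exp (1 / u - 1) := by
      have h1 : h * (bInfty b ^ 2 * s) = u * s := by rw [hu]; ring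
      have h2 : 1 + u * s = u := by
        rw [hsdef]; field_simp; ring
      have h3 : -s = 1 / u - 1 := by rw [hsdef]; ring
      rw [h1, h2, h3, mul_comm]
    rw [key] at this
    linarith
  · intro H x hx0
    set s := ∑ ℓ, x ℓ with hsdef
    have hs : 0 ≤ s := Finset.sum_nonneg fun ℓ _ => hx0 ℓ
    have hcs := vnc_cs b x hx0
    have step1 : Real.exp (-s) * (1 + h * (∑ ℓ, b ℓ * Real.sqrt (x ℓ)) ^ 2)
        ≤ Real.exp (-s) * (1 + u * s) := by
      apply mul_le_mul_of_nonneg_left _ (Real.exp_nonneg _)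
      have : h * (∑ ℓ, b ℓ * Real.sqrt (x ℓ)) ^ 2 ≤ h * (bInfty b ^ 2 * s) :=
        mul_le_mul_of_nonneg_left hcs hh.le
      have h2 : h * (bInfty b ^ 2 * s) = u * s := by rw [hu]; ring
      linarith
    rcases H with hu1 | ⟨hu1, hineq⟩
    · have h1 : Real.exp (-s) * (1 + u * s) ≤ Real.exp (-s) * (1 + s) := by
        apply mul_le_mul_of_nonneg_left _ (Real.exp_nonneg _)
        nlinarith
      have h2 : Real.exp (-s) * (1 + s) ≤ 1 := by
        have h3 : s + 1 ≤ Real.exp s := Real.add_one_le_exp s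
        have h4 : Real.exp (-s) * Real.exp s = 1 := by
          rw [← Real.exp_add]; simp
        nlinarith [Real.exp_nonneg (-s)]
      linarith
    · have := vnc_key_scalar u s hupos
      linarith
end

section
/- Let d ≥ 1, b ∈ ℝ^d with b ≠ 0, and h > 0. Then the inequality e^{−Σ_{ℓ=1}^d x_ℓ} · ( 1 + h (Σ_{ℓ=1}^d b_ℓ √x_ℓ)² ) ≤ 1 holds for every x ∈ [0,∞)^d if and only if |b|_∞² h ≤ 1. Consequently, when the driver f(y,z) = Σ_{ℓ=1}^d b_ℓ z^ℓ depends only on z (a = 0), the implicit Euler scheme is Von Neumann stable if and only if |b|_∞² h ≤ 1. -/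
private lemma exp_quad (ε : ℝ) (h0 : 0 ≤ ε) (h1 : ε ≤ 1) :
    Real.exp ε ≤ 1 + ε + 3/4 * ε ^ 2 := by
  have := Real.exp_bound' h0 h1 (n := 2) (by norm_num)
  have h2 : (∑ m ∈ Finset.range 2, ε ^ m / m.factorial) = 1 + ε := by
    simp [Finset.sum_range_succ]
  rw [h2] at this
  norm_num [Nat.factorial] at this
  linarith

private lemma inv_le_helper {e A : ℝ} (he : 0 < e) (h : e⁻¹ * A ≤ 1) : A ≤ e := by
  have h2 := mul_le_mul_of_nonneg_left h he.le
  rwa [mul_one, ← mul_assoc, mul_inv_cancel₀ he.ne', one_mul] at h2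

/-- If `1 + h t S² ≤ e^{tS}` for all `t ≥ 0` then `h S ≤ 1`. -/
private lemma aux_forward (S h : ℝ) (hS : 0 ≤ S) (hh : 0 < h)
    (H : ∀ t : ℝ, 0 ≤ t → 1 + h * t * S ^ 2 ≤ Real.exp (t * S)) : h * S ≤ 1 := by
  by_contra hc
  push_neg at hc
  have hSpos : 0 < S := by
    rcases hS.lt_or_eq with h' | h'
    · exact h'
    · exfalso; rw [← h'] at hc; simp at hc; linarith
  set ε := min 1 (h * S - 1) with hε
  have hε0 : 0 < ε := lt_min one_pos (by linarith)
  have hε1 : ε ≤ 1 := min_le_left _ _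
  have hεle : ε ≤ h * S - 1 := min_le_right _ _
  have ht0 : 0 ≤ ε / S := le_of_lt (div_pos hε0 hSpos)
  have hkey := H (ε / S) ht0
  rw [div_mul_cancel₀ _ (ne_of_gt hSpos)] at hkey
  have hexp : Real.exp ε ≤ 1 + ε + 3/4 * ε ^ 2 := exp_quad ε hε0.le hε1
  have hlhs : 1 + h * S * ε ≤ 1 + ε + 3/4 * ε ^ 2 := by
    calc 1 + h * S * ε = 1 + h * (ε / S) * S ^ 2 := by field_simp
    _ ≤ Real.exp ε := hkey
    _ ≤ 1 + ε + 3/4 * ε ^ 2 := hexp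
  have hmul : h * S * ε ≤ (1 + 3/4 * ε) * ε := by nlinarith
  have : h * S ≤ 1 + 3/4 * ε := le_of_mul_le_mul_right hmul hε0
  nlinarith

/-- Von Neumann stability of the implicit Euler scheme for a driver depending only on
`z` (`a = 0`): the inequality `e^{-Σ x_ℓ} (1 + h (Σ b_ℓ √x_ℓ)²) ≤ 1` holds on the whole
nonnegative orthant if and only if `|b|_∞² h ≤ 1`. -/
theorem von_neumann_criterion_implicit_a_eq_zero (d : ℕ) (hd : 1 ≤ d)
    (b : Fin d → ℝ) (hb : b ≠ 0) (h : ℝ) (hh : 0 < h) :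
    (∀ x : Fin d → ℝ, (∀ ℓ, 0 ≤ x ℓ) →
        Real.exp (-∑ ℓ, x ℓ) * (1 + h * (∑ ℓ, b ℓ * Real.sqrt (x ℓ)) ^ 2) ≤ 1)
      ↔ bInfty b ^ 2 * h ≤ 1 := by
  set Sp := ∑ ℓ, max (b ℓ) 0 ^ 2 with hSp
  set Sm := ∑ ℓ, min (b ℓ) 0 ^ 2 with hSm
  have hSp0 : 0 ≤ Sp := Finset.sum_nonneg fun i _ => sq_nonneg _
  have hSm0 : 0 ≤ Sm := Finset.sum_nonneg fun i _ => sq_nonneg _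
  have hbsq : bInfty b ^ 2 = max Sp Sm := by
    rw [bInfty]
    rcases le_total Sp Sm with h' | h'
    · rw [max_eq_right (Real.sqrt_le_sqrt h'), Real.sq_sqrt hSm0, max_eq_right h']
    · rw [max_eq_left (Real.sqrt_le_sqrt h'), Real.sq_sqrt hSp0, max_eq_left h']
  rw [hbsq]
  constructor
  · -- forward
    intro H
    have key : ∀ S : ℝ, 0 ≤ S →
        (∀ t : ℝ, 0 ≤ t → 1 + h * t * S ^ 2 ≤ Real.exp (t * S)) → S * h ≤ 1 := by
      intro S hS0 H'
      have := aux_forward S h hS0 hh H'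
      linarith
    have hp : Sp * h ≤ 1 := by
      apply key Sp hSp0
      intro t ht
      have hx : ∀ ℓ : Fin d, (0:ℝ) ≤ t * max (b ℓ) 0 ^ 2 :=
        fun ℓ => mul_nonneg ht (sq_nonneg _)
      have hH := H (fun ℓ => t * max (b ℓ) 0 ^ 2) hx
      have hsum : ∑ ℓ, t * max (b ℓ) 0 ^ 2 = t * Sp := by
        rw [hSp, Finset.mul_sum]
      have hsqrt : ∀ ℓ : Fin d, Real.sqrt (t * max (b ℓ) 0 ^ 2)
          = Real.sqrt t * max (b ℓ) 0 := by
        intro ℓ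
        rw [Real.sqrt_mul ht, Real.sqrt_sq (le_max_right _ _)]
      have hterm : ∀ ℓ : Fin d, b ℓ * (Real.sqrt t * max (b ℓ) 0)
          = Real.sqrt t * max (b ℓ) 0 ^ 2 := by
        intro ℓ
        rcases le_total (b ℓ) 0 with hbℓ | hbℓ
        · rw [max_eq_right hbℓ]; ring
        · rw [max_eq_left hbℓ]; ring
      have hsum2 : (∑ ℓ, b ℓ * Real.sqrt (t * max (b ℓ) 0 ^ 2)) = Real.sqrt t * Sp := by
        rw [hSp, Finset.mul_sum]
        exact Finset.sum_congr rfl fun ℓ _ => by rw [hsqrt ℓ, hterm ℓ]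
      rw [hsum, hsum2] at hH
      have hsq : (Real.sqrt t * Sp) ^ 2 = t * Sp ^ 2 := by
        rw [mul_pow, Real.sq_sqrt ht]
      rw [hsq] at hH
      rw [Real.exp_neg] at hH
      calc 1 + h * t * Sp ^ 2 = 1 + h * (t * Sp ^ 2) := by ring
      _ ≤ Real.exp (t * Sp) := inv_le_helper (Real.exp_pos _) hH
    have hm : Sm * h ≤ 1 := by
      apply key Sm hSm0
      intro t ht
      have hx : ∀ ℓ : Fin d, (0:ℝ) ≤ t * min (b ℓ) 0 ^ 2 :=
        fun ℓ => mul_nonneg ht (sq_nonneg _)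
      have hH := H (fun ℓ => t * min (b ℓ) 0 ^ 2) hx
      have hsum : ∑ ℓ, t * min (b ℓ) 0 ^ 2 = t * Sm := by
        rw [hSm, Finset.mul_sum]
      have hsqrt : ∀ ℓ : Fin d, Real.sqrt (t * min (b ℓ) 0 ^ 2)
          = Real.sqrt t * (-(min (b ℓ) 0)) := by
        intro ℓ
        rw [Real.sqrt_mul ht, show min (b ℓ) 0 ^ 2 = (-(min (b ℓ) 0)) ^ 2 by ring,
          Real.sqrt_sq (by simp [min_le_right])]
      have hterm : ∀ ℓ : Fin d, b ℓ * (Real.sqrt t * (-(min (b ℓ) 0)))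
          = -(Real.sqrt t * min (b ℓ) 0 ^ 2) := by
        intro ℓ
        rcases le_total (b ℓ) 0 with hbℓ | hbℓ
        · rw [min_eq_left hbℓ]; ring
        · rw [min_eq_right hbℓ]; ring
      have hsum2 : (∑ ℓ, b ℓ * Real.sqrt (t * min (b ℓ) 0 ^ 2))
          = -(Real.sqrt t * Sm) := by
        rw [hSm, Finset.mul_sum, ← Finset.sum_neg_distrib]
        exact Finset.sum_congr rfl fun ℓ _ => by rw [hsqrt ℓ, hterm ℓ]
      rw [hsum, hsum2] at hH
      have hsq : (-(Real.sqrt t * Sm)) ^ 2 = t * Sm ^ 2 := by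
        rw [neg_pow, mul_pow, Real.sq_sqrt ht]; ring
      rw [hsq] at hH
      rw [Real.exp_neg] at hH
      calc 1 + h * t * Sm ^ 2 = 1 + h * (t * Sm ^ 2) := by ring
      _ ≤ Real.exp (t * Sm) := inv_le_helper (Real.exp_pos _) hH
    rcases le_total Sp Sm with h' | h'
    · rw [max_eq_right h']; exact hm
    · rw [max_eq_left h']; exact hp
  · -- converse
    intro hM x hx
    set s := ∑ ℓ, x ℓ with hs
    have hs0 : 0 ≤ s := Finset.sum_nonneg fun i _ => hx i
    set u := ∑ ℓ, b ℓ * Real.sqrt (x ℓ) with hu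
    set p := ∑ ℓ, max (b ℓ) 0 * Real.sqrt (x ℓ) with hp
    set n := ∑ ℓ, (-(min (b ℓ) 0)) * Real.sqrt (x ℓ) with hn
    have hp0 : 0 ≤ p := Finset.sum_nonneg fun i _ =>
      mul_nonneg (le_max_right _ _) (Real.sqrt_nonneg _)
    have hn0 : 0 ≤ n := Finset.sum_nonneg fun i _ =>
      mul_nonneg (by simp [min_le_right]) (Real.sqrt_nonneg _)
    have hupn : u = p - n := by
      rw [hu, hp, hn, ← Finset.sum_sub_distrib]
      exact Finset.sum_congr rfl fun ℓ _ => by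
        rw [← sub_mul]
        congr 1
        rcases le_total (b ℓ) 0 with h' | h'
        · rw [max_eq_right h', min_eq_left h']; ring
        · rw [max_eq_left h', min_eq_right h']; ring
    have hsqsum : ∑ ℓ, Real.sqrt (x ℓ) ^ 2 = s := by
      rw [hs]; exact Finset.sum_congr rfl fun ℓ _ => Real.sq_sqrt (hx ℓ)
    have hpcs : p ^ 2 ≤ Sp * s := by
      calc p ^ 2 ≤ (∑ ℓ, max (b ℓ) 0 ^ 2) * ∑ ℓ, Real.sqrt (x ℓ) ^ 2 :=
        Finset.sum_mul_sq_le_sq_mul_sq _ _ _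
      _ = Sp * s := by rw [hsqsum, hSp]
    have hncs : n ^ 2 ≤ Sm * s := by
      calc n ^ 2 ≤ (∑ ℓ, (-(min (b ℓ) 0)) ^ 2) * ∑ ℓ, Real.sqrt (x ℓ) ^ 2 :=
        Finset.sum_mul_sq_le_sq_mul_sq _ _ _
      _ = Sm * s := by
          rw [hsqsum, hSm]
          congr 1
          exact Finset.sum_congr rfl fun ℓ _ => by ring
    have husq : u ^ 2 ≤ max Sp Sm * s := by
      have h1 : u ^ 2 ≤ max (p ^ 2) (n ^ 2) := by
        rw [hupn]
        rcases le_total n p with h' | h'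
        · refine le_trans ?_ (le_max_left _ _)
          nlinarith
        · refine le_trans ?_ (le_max_right _ _)
          nlinarith
      refine h1.trans ?_
      rw [max_mul_of_nonneg _ _ hs0]
      exact max_le_max hpcs hncs
    have hMs : h * u ^ 2 ≤ s := by
      have h1 : h * u ^ 2 ≤ h * (max Sp Sm * s) :=
        mul_le_mul_of_nonneg_left husq hh.le
      have h2 : h * (max Sp Sm * s) ≤ s := by
        have : max Sp Sm * h ≤ 1 := hM
        nlinarith [le_max_left Sp Sm, hSp0]
      linarith
    have hexp : (1 : ℝ) + s ≤ Real.exp s := by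
      have := Real.add_one_le_exp s; linarith
    calc Real.exp (-s) * (1 + h * u ^ 2)
        ≤ Real.exp (-s) * (1 + s) := by
          apply mul_le_mul_of_nonneg_left _ (Real.exp_pos _).le
          linarith
      _ ≤ Real.exp (-s) * Real.exp s := by
          apply mul_le_mul_of_nonneg_left hexp (Real.exp_pos _).le
      _ = 1 := by rw [← Real.exp_add]; simp
end

section
/- Let d ≥ 1, a ≤ 0, b ∈ ℝ^d with b ≠ 0, h > 0, and set u := |b|_∞² h and c := (1 + a h)². Then the following are equivalent: (1) for every x ∈ [0,∞)^d, e^{−Σ_{ℓ=1}^d x_ℓ} · ( (1 + a h)² + h (Σ_{ℓ=1}^d b_ℓ √x_ℓ)² ) ≤ 1; (2) either (u ≤ c and c ≤ 1), or (u > c and 1 − u · e^{c/u − 1} ≥ 0). This is the Von Neumann stability criterion of the pseudo-explicit Euler scheme for the linear driver f(y,z) = a y + Σ_{ℓ=1}^d b_ℓ z^ℓ. (The condition c ≤ 1 is equivalent to h ≤ −2/a when a < 0, and always holds when a = 0.) -/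
/-- Scalar reduction of the Von Neumann criterion. -/
lemma scalar_criterion (u c : ℝ) (hu : 0 < u) (hc : 0 ≤ c) :
    (∀ s : ℝ, 0 ≤ s → Real.exp (-s) * (c + u * s) ≤ 1) ↔
      ((u ≤ c ∧ c ≤ 1) ∨ (c < u ∧ 0 ≤ 1 - u * Real.exp (c / u - 1))) := by
  constructor
  · intro H
    rcases le_or_gt u c with h1 | h1
    · left
      refine ⟨h1, ?_⟩
      have := H 0 le_rfl
      simpa using this
    · right
      refine ⟨h1, ?_⟩
      have hs : (0:ℝ) ≤ 1 - c / u := by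
        have : c / u < 1 := (div_lt_one hu).2 h1
        linarith
      have := H (1 - c / u) hs
      have hcu : c + u * (1 - c / u) = u := by field_simp; ring
      rw [hcu] at this
      have hexp : -(1 - c / u) = c / u - 1 := by ring
      rw [hexp] at this
      linarith [this, mul_comm (Real.exp (c / u - 1)) u]
  · rintro (⟨huc, hc1⟩ | ⟨hcu, hineq⟩) <;> intro s hs
    · have h1 : c + u * s ≤ c * Real.exp s := by
        have h2 : s + 1 ≤ Real.exp s := Real.add_one_le_exp s
        nlinarith
      have h3 : Real.exp (-s) * (c + u * s) ≤ Real.exp (-s) * (c * Real.exp s) :=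
        mul_le_mul_of_nonneg_left h1 (Real.exp_nonneg _)
      have h4 : Real.exp (-s) * (c * Real.exp s) = c := by
        rw [Real.exp_neg]
        field_simp
      linarith
    · have key : c / u + s ≤ Real.exp (s - 1 + c / u) := by
          have := Real.add_one_le_exp (s - 1 + c / u)
          linarith
      have h1 : c + u * s ≤ u * Real.exp (s - 1 + c / u) := by
        have := mul_le_mul_of_nonneg_left key hu.le
        have hcu2 : u * (c / u + s) = c + u * s := by field_simp
        linarith [this, hcu2.symm.le]
      have h2 : u * Real.exp (s - 1 + c / u) = (u * Real.exp (c / u - 1)) * Real.exp s := by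
        rw [mul_assoc, ← Real.exp_add]; ring_nf
      have h3 : u * Real.exp (c / u - 1) ≤ 1 := by linarith
      have h4 : c + u * s ≤ Real.exp s := by
        calc c + u * s ≤ (u * Real.exp (c / u - 1)) * Real.exp s := by rw [← h2]; exact h1
        _ ≤ 1 * Real.exp s := mul_le_mul_of_nonneg_right h3 (Real.exp_nonneg _)
        _ = Real.exp s := one_mul _
      have h5 : Real.exp (-s) * (c + u * s) ≤ Real.exp (-s) * Real.exp s :=
        mul_le_mul_of_nonneg_left h4 (Real.exp_nonneg _)
      rw [← Real.exp_add] at h5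
      simpa using h5

/-- Von Neumann stability criterion of the pseudo-explicit Euler scheme for the linear
driver `f(y,z) = a y + Σ b_ℓ z^ℓ`: with `u := |b|_∞² h` and `c := (1 + a h)²`, the
inequality `e^{-Σ x_ℓ} ((1 + a h)² + h (Σ b_ℓ √x_ℓ)²) ≤ 1` holds on the whole
nonnegative orthant if and only if (`u ≤ c` and `c ≤ 1`), or (`u > c` and
`1 - u e^{c/u - 1} ≥ 0`). -/
theorem von_neumann_criterion_pseudo_explicit (d : ℕ) (hd : 1 ≤ d) (a : ℝ) (ha : a ≤ 0)
    (b : Fin d → ℝ) (hb : b ≠ 0) (h : ℝ) (hh : 0 < h) :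
    (∀ x : Fin d → ℝ, (∀ ℓ, 0 ≤ x ℓ) →
        Real.exp (-∑ ℓ, x ℓ) *
          ((1 + a * h) ^ 2 + h * (∑ ℓ, b ℓ * Real.sqrt (x ℓ)) ^ 2) ≤ 1)
      ↔ ((bInfty b ^ 2 * h ≤ (1 + a * h) ^ 2 ∧ (1 + a * h) ^ 2 ≤ 1) ∨
          ((1 + a * h) ^ 2 < bInfty b ^ 2 * h ∧
            0 ≤ 1 - bInfty b ^ 2 * h *
              Real.exp ((1 + a * h) ^ 2 / (bInfty b ^ 2 * h) - 1))) := by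
  set A : ℝ := ∑ ℓ, max (b ℓ) 0 ^ 2 with hA
  set B : ℝ := ∑ ℓ, min (b ℓ) 0 ^ 2 with hB
  have hA0 : 0 ≤ A := Finset.sum_nonneg fun _ _ => sq_nonneg _
  have hB0 : 0 ≤ B := Finset.sum_nonneg fun _ _ => sq_nonneg _
  have hm : bInfty b = Real.sqrt (max A B) := by
    rw [bInfty, ← hA, ← hB]
    rcases le_total A B with hab | hab
    · rw [max_eq_right hab, max_eq_right (Real.sqrt_le_sqrt hab)]
    · rw [max_eq_left hab, max_eq_left (Real.sqrt_le_sqrt hab)]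
  have hm2 : bInfty b ^ 2 = max A B := by
    rw [hm, Real.sq_sqrt (le_max_of_le_left hA0)]
  have hMpos : 0 < max A B := by
    obtain ⟨ℓ, hℓ⟩ : ∃ ℓ, b ℓ ≠ 0 := by
      by_contra hc
      push_neg at hc
      exact hb (funext hc)
    rcases lt_or_gt_of_ne hℓ with hneg | hpos
    · have : 0 < B := by
        have h1 : min (b ℓ) 0 ^ 2 ≤ B :=
          Finset.single_le_sum (f := fun ℓ => min (b ℓ) 0 ^ 2)
            (fun _ _ => sq_nonneg _) (Finset.mem_univ ℓ)
        have : 0 < min (b ℓ) 0 ^ 2 := by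
          rw [min_eq_left hneg.le]; nlinarith
        linarith
      exact lt_max_of_lt_right this
    · have : 0 < A := by
        have h1 : max (b ℓ) 0 ^ 2 ≤ A :=
          Finset.single_le_sum (f := fun ℓ => max (b ℓ) 0 ^ 2)
            (fun _ _ => sq_nonneg _) (Finset.mem_univ ℓ)
        have : 0 < max (b ℓ) 0 ^ 2 := by
          rw [max_eq_left hpos.le]; nlinarith
        linarith
      exact lt_max_of_lt_left this
  set M : ℝ := max A B with hMdef
  have hu : 0 < bInfty b ^ 2 * h := by rw [hm2]; exact mul_pos hMpos hh
  have hc : (0:ℝ) ≤ (1 + a * h) ^ 2 := sq_nonneg _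
  rw [← scalar_criterion (bInfty b ^ 2 * h) ((1 + a * h) ^ 2) hu hc]
  constructor
  · -- multidim ⇒ scalar: plug in the extremal x
    intro H s hs
    rcases le_total B A with hab | hab
    · -- M = A
      have hMA : M = A := max_eq_left hab
      have hApos : 0 < A := hMA ▸ hMpos
      set x : Fin d → ℝ := fun ℓ => max (b ℓ) 0 ^ 2 * (s / A) with hx
      have hxnn : ∀ ℓ, 0 ≤ x ℓ := fun ℓ => by positivity
      have hsum : ∑ ℓ, x ℓ = s := by
        rw [hx, ← Finset.sum_mul, ← hA]
        field_simp
      have hsqrt : ∀ ℓ, Real.sqrt (x ℓ) = max (b ℓ) 0 * Real.sqrt (s / A) := by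
        intro ℓ
        rw [hx, Real.sqrt_mul (sq_nonneg _), Real.sqrt_sq (le_max_right _ _)]
      have hbmax : ∀ ℓ, b ℓ * max (b ℓ) 0 = max (b ℓ) 0 ^ 2 := by
        intro ℓ
        rcases le_total (b ℓ) 0 with h' | h'
        · rw [max_eq_right h']; ring
        · rw [max_eq_left h']; ring
      have hS : ∑ ℓ, b ℓ * Real.sqrt (x ℓ) = A * Real.sqrt (s / A) := by
        simp_rw [hsqrt, ← mul_assoc, hbmax]
        rw [← Finset.sum_mul, ← hA]
      have hS2 : (∑ ℓ, b ℓ * Real.sqrt (x ℓ)) ^ 2 = A * s := by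
        rw [hS, mul_pow, Real.sq_sqrt (by positivity)]
        field_simp
      have := H x hxnn
      rw [hsum, hS2] at this
      rw [hm2, hMA]
      calc Real.exp (-s) * ((1 + a * h) ^ 2 + A * h * s)
          = Real.exp (-s) * ((1 + a * h) ^ 2 + h * (A * s)) := by ring_nf
        _ ≤ 1 := this
    · -- M = B
      have hMB : M = B := max_eq_right hab
      have hBpos : 0 < B := hMB ▸ hMpos
      set x : Fin d → ℝ := fun ℓ => min (b ℓ) 0 ^ 2 * (s / B) with hx
      have hxnn : ∀ ℓ, 0 ≤ x ℓ := fun ℓ => by positivity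
      have hsum : ∑ ℓ, x ℓ = s := by
        rw [hx, ← Finset.sum_mul, ← hB]
        field_simp
      have hsqrt : ∀ ℓ, Real.sqrt (x ℓ) = -(min (b ℓ) 0) * Real.sqrt (s / B) := by
        intro ℓ
        rw [hx, Real.sqrt_mul (sq_nonneg _)]
        congr 1
        rw [show min (b ℓ) 0 ^ 2 = (-(min (b ℓ) 0)) ^ 2 by ring]
        exact Real.sqrt_sq (by simp [le_min_iff, min_le_right])
      have hbmin : ∀ ℓ, b ℓ * -(min (b ℓ) 0) = -(min (b ℓ) 0 ^ 2) := by
        intro ℓ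
        rcases le_total (b ℓ) 0 with h' | h'
        · rw [min_eq_left h']; ring
        · rw [min_eq_right h']; ring
      have hS : ∑ ℓ, b ℓ * Real.sqrt (x ℓ) = -B * Real.sqrt (s / B) := by
        simp_rw [hsqrt, ← mul_assoc, hbmin]
        rw [← Finset.sum_mul]
        have : ∑ ℓ, -(min (b ℓ) 0 ^ 2) = -B := by
          rw [hB]; exact Finset.sum_neg_distrib _
        rw [this]
      have hS2 : (∑ ℓ, b ℓ * Real.sqrt (x ℓ)) ^ 2 = B * s := by
        rw [hS, mul_pow, Real.sq_sqrt (by positivity)]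
        field_simp
      have := H x hxnn
      rw [hsum, hS2] at this
      rw [hm2, hMB]
      calc Real.exp (-s) * ((1 + a * h) ^ 2 + B * h * s)
          = Real.exp (-s) * ((1 + a * h) ^ 2 + h * (B * s)) := by ring_nf
        _ ≤ 1 := this
  · -- scalar ⇒ multidim: Cauchy–Schwarz
    intro H x hx
    set s : ℝ := ∑ ℓ, x ℓ with hsdef
    have hs : 0 ≤ s := Finset.sum_nonneg fun ℓ _ => hx ℓ
    set S : ℝ := ∑ ℓ, b ℓ * Real.sqrt (x ℓ) with hSdef
    have hgsq : ∑ ℓ, Real.sqrt (x ℓ) ^ 2 = s := by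
      rw [hsdef]
      exact Finset.sum_congr rfl fun ℓ _ => Real.sq_sqrt (hx ℓ)
    have hP2 : (∑ ℓ, max (b ℓ) 0 * Real.sqrt (x ℓ)) ^ 2 ≤ A * s := by
      have := Finset.sum_mul_sq_le_sq_mul_sq Finset.univ
        (fun ℓ => max (b ℓ) 0) (fun ℓ => Real.sqrt (x ℓ))
      rwa [hgsq, ← hA] at this
    have hQ2 : (∑ ℓ, -(min (b ℓ) 0) * Real.sqrt (x ℓ)) ^ 2 ≤ B * s := by
      have := Finset.sum_mul_sq_le_sq_mul_sq Finset.univ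
        (fun ℓ => -(min (b ℓ) 0)) (fun ℓ => Real.sqrt (x ℓ))
      simp_rw [Even.neg_pow even_two] at this
      rwa [hgsq, ← hB] at this
    have hSP : S ≤ ∑ ℓ, max (b ℓ) 0 * Real.sqrt (x ℓ) := by
      apply Finset.sum_le_sum
      intro ℓ _
      exact mul_le_mul_of_nonneg_right (le_max_left _ _) (Real.sqrt_nonneg _)
    have hSQ : -S ≤ ∑ ℓ, -(min (b ℓ) 0) * Real.sqrt (x ℓ) := by
      rw [hSdef, ← Finset.sum_neg_distrib]
      apply Finset.sum_le_sum
      intro ℓ _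
      rw [← neg_mul]
      exact mul_le_mul_of_nonneg_right (by simp [min_le_left]) (Real.sqrt_nonneg _)
    have hPnn : 0 ≤ ∑ ℓ, max (b ℓ) 0 * Real.sqrt (x ℓ) :=
      Finset.sum_nonneg fun ℓ _ => mul_nonneg (le_max_right _ _) (Real.sqrt_nonneg _)
    have hQnn : 0 ≤ ∑ ℓ, -(min (b ℓ) 0) * Real.sqrt (x ℓ) :=
      Finset.sum_nonneg fun ℓ _ =>
        mul_nonneg (by simp [min_le_right]) (Real.sqrt_nonneg _)
    have hS2 : S ^ 2 ≤ bInfty b ^ 2 * s := by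
      rw [hm2]
      rcases le_total 0 S with hSs | hSs
      · calc S ^ 2 ≤ (∑ ℓ, max (b ℓ) 0 * Real.sqrt (x ℓ)) ^ 2 := by nlinarith
          _ ≤ A * s := hP2
          _ ≤ max A B * s := mul_le_mul_of_nonneg_right (le_max_left _ _) hs
      · calc S ^ 2 = (-S) ^ 2 := by ring
          _ ≤ (∑ ℓ, -(min (b ℓ) 0) * Real.sqrt (x ℓ)) ^ 2 := by nlinarith
          _ ≤ B * s := hQ2
          _ ≤ max A B * s := mul_le_mul_of_nonneg_right (le_max_right _ _) hs
    have := H s hs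
    calc Real.exp (-s) * ((1 + a * h) ^ 2 + h * S ^ 2)
        ≤ Real.exp (-s) * ((1 + a * h) ^ 2 + h * (bInfty b ^ 2 * s)) := by
          apply mul_le_mul_of_nonneg_left _ (Real.exp_nonneg _)
          have := mul_le_mul_of_nonneg_left hS2 hh.le
          linarith
      _ = Real.exp (-s) * ((1 + a * h) ^ 2 + bInfty b ^ 2 * h * s) := by ring
      _ ≤ 1 := this
end

section
/- For 0 < p < 2 let ū(p) ∈ [1, 2/p) denote the right endpoint of the Von Neumann stability region of the pseudo-explicit scheme in the variable u, i.e. the unique value with ū(p) · e^{(1 − p ū(p))²/ū(p) − 1} = 1 such that the stability predicate S(p,u) holds exactly for u ≤ ū(p). Then: (i) ū(p) → 1 as p → 0⁺; (ii) p · ū(p) / 2 → 1 as p → 2⁻. -/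
open Filter

/-- The Von Neumann stability predicate of the pseudo-explicit Euler scheme in the
variables `p = -a/|b|_∞²`, `u = |b|_∞² h` (note `(1 + a h)² = (1 - p u)²`). -/
noncomputable def SpredVN (p u : ℝ) : Prop :=
  (u ≤ (1 - p * u) ^ 2 ∧ (1 - p * u) ^ 2 ≤ 1) ∨
    ((1 - p * u) ^ 2 < u ∧ u * Real.exp ((1 - p * u) ^ 2 / u - 1) ≤ 1)

lemma gt_one_aux {u : ℝ} (hu : 1 < u) : 1 < u * Real.exp (1 / u - 1) := by
  have hu0 : 0 < u := lt_trans one_pos hu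
  have h := Real.add_one_lt_exp (x := 1 / u - 1) (by
    intro h
    have h1 : 1 / u = 1 := by linarith
    have : u = 1 := by field_simp at h1; linarith
    linarith)
  have h2 : 1 / u < Real.exp (1 / u - 1) := by linarith
  calc 1 = u * (1 / u) := by field_simp
  _ < u * Real.exp (1 / u - 1) := mul_lt_mul_of_pos_left h2 hu0

/-- Limits of the right endpoint `ū(p)` of the Von Neumann stability region of the
pseudo-explicit scheme: given `ub : ℝ → ℝ` such that for all `0 < p < 2`, `ub p` lies in
`[1, 2/p)`, satisfies `ub p · e^{(1 - p·ub p)²/ub p − 1} = 1`, and the stability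
predicate holds exactly for `u ≤ ub p`, one has `ub p → 1` as `p → 0⁺` and
`p · ub p / 2 → 1` as `p → 2⁻`. -/
theorem von_neumann_pseudo_explicit_endpoint_limits (ub : ℝ → ℝ)
    (hub : ∀ p : ℝ, 0 < p → p < 2 →
      1 ≤ ub p ∧ ub p < 2 / p ∧
        ub p * Real.exp ((1 - p * ub p) ^ 2 / ub p - 1) = 1 ∧
        ∀ u : ℝ, 0 < u → (SpredVN p u ↔ u ≤ ub p)) :
    Tendsto ub (nhdsWithin 0 (Set.Ioi 0)) (nhds 1) ∧
    Tendsto (fun p => p * ub p / 2) (nhdsWithin 2 (Set.Iio 2)) (nhds 1) := by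
  have hmem0 : Set.Ioo (0 : ℝ) 2 ∈ nhdsWithin (0 : ℝ) (Set.Ioi 0) :=
    Ioo_mem_nhdsGT_of_mem (by constructor <;> norm_num)
  have hmem2 : Set.Ioo (0 : ℝ) 2 ∈ nhdsWithin (2 : ℝ) (Set.Iio 2) :=
    Ioo_mem_nhdsLT_of_mem (by constructor <;> norm_num)
  constructor
  · rw [tendsto_order]
    constructor
    · intro a ha
      filter_upwards [hmem0] with p hp
      have := (hub p hp.1 hp.2).1
      linarith
    · intro a ha
      set u : ℝ := (1 + a) / 2 with hu
      have hu1 : 1 < u := by rw [hu]; linarith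
      have hua : u < a := by rw [hu]; linarith
      have hu0 : 0 < u := lt_trans one_pos hu1
      -- continuity in p at p = 0
      have hc1 : Tendsto (fun p : ℝ => (1 - p * u) ^ 2) (nhds 0) (nhds 1) := by
        have : ContinuousAt (fun p : ℝ => (1 - p * u) ^ 2) 0 := by fun_prop
        simpa using this.tendsto
      have hc2 : Tendsto (fun p : ℝ => u * Real.exp ((1 - p * u) ^ 2 / u - 1))
          (nhds 0) (nhds (u * Real.exp (1 / u - 1))) := by
        have : ContinuousAt (fun p : ℝ => u * Real.exp ((1 - p * u) ^ 2 / u - 1)) 0 := by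
          apply ContinuousAt.mul continuousAt_const
          apply Real.continuous_exp.continuousAt.comp
          fun_prop (disch := positivity)
        simpa using this.tendsto
      have he1 : ∀ᶠ p : ℝ in nhds 0, (1 - p * u) ^ 2 < u := hc1.eventually_lt_const hu1
      have he2 : ∀ᶠ p : ℝ in nhds 0, 1 < u * Real.exp ((1 - p * u) ^ 2 / u - 1) :=
        hc2.eventually_const_lt (gt_one_aux hu1)
      filter_upwards [hmem0, nhdsWithin_le_nhds he1, nhdsWithin_le_nhds he2] with p hp h1 h2
      obtain ⟨_, _, _, hiff⟩ := hub p hp.1 hp.2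
      have : ¬ SpredVN p u := by
        rintro (⟨h, -⟩ | ⟨-, h⟩) <;> linarith
      have : ¬ (u ≤ ub p) := fun h => this ((hiff u hu0).2 h)
      push_neg at this
      linarith
  · rw [tendsto_order]
    constructor
    · intro a ha
      -- choose c ∈ (1/4, 1) with a < c
      set c : ℝ := (max a (1/2) + 1) / 2 with hc
      have hac : a < c := by
        have := le_max_left a (1/2 : ℝ)
        have := (max_lt ha (by norm_num : (1:ℝ)/2 < 1))
        rw [hc]; linarith [le_max_left a (1/2 : ℝ)]
      have hc1 : c < 1 := by
        have := (max_lt ha (by norm_num : (1:ℝ)/2 < 1))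
        rw [hc]; linarith
      have hclb : (1/2 : ℝ) ≤ c := by
        have := le_max_right a (1/2 : ℝ)
        rw [hc]; linarith
      have hc0 : 0 < c := by linarith
      -- key strict inequalities at p = 2
      have key1 : (1 - 2 * c) ^ 2 < c := by nlinarith
      have key2 : c * Real.exp ((1 - 2 * c) ^ 2 / c - 1) < 1 := by
        have hexp : (1 - 2 * c) ^ 2 / c - 1 < 0 := by
          rw [sub_neg, div_lt_one hc0]; nlinarith
        have := Real.exp_lt_one_iff.2 hexp
        nlinarith [Real.exp_pos ((1 - 2 * c) ^ 2 / c - 1)]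
      -- continuity in p at p = 2
      have hc1' : Tendsto (fun p : ℝ => 2 * c / p) (nhds 2) (nhds c) := by
        have : ContinuousAt (fun p : ℝ => 2 * c / p) 2 :=
          ContinuousAt.div continuousAt_const continuousAt_id (by norm_num)
        have h2 : 2 * c / 2 = c := by ring
        simpa [h2] using this.tendsto
      have hc2' : Tendsto (fun p : ℝ => (2 * c / p) * Real.exp ((1 - 2 * c) ^ 2 / (2 * c / p) - 1))
          (nhds 2) (nhds (c * Real.exp ((1 - 2 * c) ^ 2 / c - 1))) := by
        have : ContinuousAt
            (fun p : ℝ => (2 * c / p) * Real.exp ((1 - 2 * c) ^ 2 / (2 * c / p) - 1)) 2 := by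
          have hdiv : ContinuousAt (fun p : ℝ => 2 * c / p) 2 :=
            ContinuousAt.div continuousAt_const continuousAt_id (by norm_num)
          apply hdiv.mul
          apply Real.continuous_exp.continuousAt.comp
          apply ContinuousAt.sub _ continuousAt_const
          apply ContinuousAt.div continuousAt_const hdiv
          show 2 * c / 2 ≠ 0
          positivity
        have h2 : 2 * c / 2 = c := by ring
        simpa [h2] using this.tendsto
      have he1 : ∀ᶠ p : ℝ in nhds 2, (1 - 2 * c) ^ 2 < 2 * c / p :=
        hc1'.eventually_const_lt key1
      have he2 : ∀ᶠ p : ℝ in nhds 2,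
          (2 * c / p) * Real.exp ((1 - 2 * c) ^ 2 / (2 * c / p) - 1) < 1 :=
        hc2'.eventually_lt_const key2
      filter_upwards [hmem2, nhdsWithin_le_nhds he1, nhdsWithin_le_nhds he2] with p hp h1 h2
      obtain ⟨-, -, -, hiff⟩ := hub p hp.1 hp.2
      have hp0 : (0:ℝ) < p := hp.1
      have hu0 : 0 < 2 * c / p := by positivity
      have hpu : p * (2 * c / p) = 2 * c := by field_simp
      have hS : SpredVN p (2 * c / p) := by
        right
        rw [hpu]
        exact ⟨h1, le_of_lt h2⟩
      have hle : 2 * c / p ≤ ub p := (hiff _ hu0).1 hS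
      have : 2 * c ≤ p * ub p := by
        calc 2 * c = p * (2 * c / p) := hpu.symm
        _ ≤ p * ub p := mul_le_mul_of_nonneg_left hle (le_of_lt hp0)
      linarith
    · intro a ha
      filter_upwards [hmem2] with p hp
      obtain ⟨-, hlt, -, -⟩ := hub p hp.1 hp.2
      have : p * ub p < 2 := by
        have := mul_lt_mul_of_pos_left hlt hp.1
        rw [mul_div_cancel₀ _ (ne_of_gt hp.1)] at this
        exact this
      linarith
end
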